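/- arXiv:0809.4106 — 5 statements merged into one kernel-verified Lean document; each statement's English description precedes it below -/
import Mathlib

section
/- Let Y and Z be bounded real random variables on a probability space, with Y measurable with respect to a σ-algebra 𝓕₁ and Z measurable with respect to a σ-algebra 𝓕₂, and suppose that for all A ∈ 𝓕₁ and B ∈ 𝓕₂ one has |P(A∩B) − P(A)P(B)| ≤ α. Then |E(YZ) − E(Y)E(Z)| ≤ 4α‖Y‖_∞‖Z‖_∞. -/
open MeasureTheory Set

/-- The "sign" function of a set: `1` on `A`, `-1` off `A`. -/
private noncomputable def sgn {Ω : Type*} (A : Set Ω) : Ω → ℝ :=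
  fun ω => 2 * A.indicator (1 : Ω → ℝ) ω - 1

private lemma sgn_mem {Ω : Type*} {A : Set Ω} {ω : Ω} (h : ω ∈ A) : sgn A ω = 1 := by
  simp [sgn, Set.indicator_of_mem h]; norm_num

private lemma sgn_not_mem {Ω : Type*} {A : Set Ω} {ω : Ω} (h : ω ∉ A) : sgn A ω = -1 := by
  simp [sgn, Set.indicator_of_notMem h]

private lemma sgn_abs_le {Ω : Type*} (A : Set Ω) (ω : Ω) : |sgn A ω| ≤ 1 := by
  by_cases h : ω ∈ A
  · rw [sgn_mem h]; norm_num
  · rw [sgn_not_mem h]; norm_num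

private lemma integrable_of_abs_bdd {Ω : Type*} {m : MeasurableSpace Ω} {μ : Measure Ω}
    [IsFiniteMeasure μ] {f : Ω → ℝ} {C : ℝ} (hf : AEStronglyMeasurable f μ)
    (h : ∀ᵐ ω ∂μ, |f ω| ≤ C) : Integrable f μ :=
  ⟨hf, HasFiniteIntegral.of_bounded (by simpa [Real.norm_eq_abs] using h)⟩

private lemma cov_step {Ω : Type*} {m : MeasurableSpace Ω} {μ : Measure Ω}
    [IsProbabilityMeasure μ] {𝓕 : MeasurableSpace Ω} (h : 𝓕 ≤ m)
    {f g : Ω → ℝ} (hf : Measurable[𝓕] f) (hg : AEStronglyMeasurable[m] g μ)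
    {C Dg : ℝ} (hC : ∀ᵐ ω ∂μ, |f ω| ≤ C) (hDg : ∀ ω, |g ω| ≤ Dg) :
    ∃ A, MeasurableSet[𝓕] A ∧
      |(∫ ω, f ω * g ω ∂μ) - (∫ ω, f ω ∂μ) * ∫ ω, g ω ∂μ| ≤
        C * ((∫ ω, sgn A ω * g ω ∂μ) -
          (∫ ω, sgn A ω ∂μ) * ∫ ω, g ω ∂μ) := by
  haveI : SigmaFinite (μ.trim h) := (isFiniteMeasure_trim h).toSigmaFinite
  have hfm : AEStronglyMeasurable[m] f μ := (hf.mono h le_rfl).aestronglyMeasurable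
  have hgint : Integrable g μ :=
    integrable_of_abs_bdd hg (Filter.Eventually.of_forall hDg)
  have hfint : Integrable f μ := integrable_of_abs_bdd hfm hC
  have hfg : Integrable (f * g) μ :=
    hgint.bdd_mul hfm (by simpa [Real.norm_eq_abs] using hC)
  set W : Ω → ℝ := μ[g | 𝓕] with hW
  have hWsm : StronglyMeasurable[𝓕] W := stronglyMeasurable_condExp
  have hWint : Integrable W μ := integrable_condExp
  set c : ℝ := ∫ ω, g ω ∂μ with hc
  -- the sign set
  set A : Set Ω := {ω | 0 ≤ W ω - c} with hA
  have hAmeas : MeasurableSet[𝓕] A := by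
    have : Measurable[𝓕] (fun ω => W ω - c) := hWsm.measurable.sub measurable_const
    exact this measurableSet_Ici
  refine ⟨A, hAmeas, ?_⟩
  set ξ : Ω → ℝ := sgn A with hξ
  have hξmF : Measurable[𝓕] ξ :=
    (measurable_const.mul (measurable_one.indicator hAmeas)).sub
      measurable_const
  have hξm : AEStronglyMeasurable[m] ξ μ := ((hξmF.mono h le_rfl)).aestronglyMeasurable
  have hξbd : ∀ ω, |ξ ω| ≤ 1 := sgn_abs_le A
  have hξint : Integrable ξ μ :=
    integrable_of_abs_bdd hξm (Filter.Eventually.of_forall hξbd)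
  have hξg : Integrable (ξ * g) μ :=
    hgint.bdd_mul hξm (Filter.Eventually.of_forall (by simpa [Real.norm_eq_abs] using hξbd))
  -- pull-out property twice
  have key1 : (∫ ω, f ω * g ω ∂μ) = ∫ ω, f ω * W ω ∂μ := by
    have hpull : μ[f * g | 𝓕] =ᵐ[μ] f * W :=
      condExp_mul_of_stronglyMeasurable_left hf.stronglyMeasurable hfg hgint
    calc (∫ ω, f ω * g ω ∂μ) = ∫ ω, (f * g) ω ∂μ := rfl
      _ = ∫ ω, (μ[f * g | 𝓕]) ω ∂μ := (integral_condExp h).symm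
      _ = ∫ ω, (f * W) ω ∂μ := integral_congr_ae hpull
      _ = ∫ ω, f ω * W ω ∂μ := rfl
  have key2 : (∫ ω, ξ ω * g ω ∂μ) = ∫ ω, ξ ω * W ω ∂μ := by
    have hpull : μ[ξ * g | 𝓕] =ᵐ[μ] ξ * W :=
      condExp_mul_of_stronglyMeasurable_left hξmF.stronglyMeasurable hξg hgint
    calc (∫ ω, ξ ω * g ω ∂μ) = ∫ ω, (ξ * g) ω ∂μ := rfl
      _ = ∫ ω, (μ[ξ * g | 𝓕]) ω ∂μ := (integral_condExp h).symm
      _ = ∫ ω, (ξ * W) ω ∂μ := integral_congr_ae hpull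
      _ = ∫ ω, ξ ω * W ω ∂μ := rfl
  have hfW : Integrable (fun ω => f ω * W ω) μ :=
    hWint.bdd_mul hfm (by simpa [Real.norm_eq_abs] using hC)
  have hξW : Integrable (fun ω => ξ ω * W ω) μ :=
    hWint.bdd_mul hξm (Filter.Eventually.of_forall (by simpa [Real.norm_eq_abs] using hξbd))
  have hC0 : 0 ≤ C := by
    obtain ⟨ω, hω⟩ := hC.exists
    exact (abs_nonneg _).trans hω
  -- main estimate
  have e1 : (∫ ω, f ω * g ω ∂μ) - (∫ ω, f ω ∂μ) * c = ∫ ω, f ω * (W ω - c) ∂μ := by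
    rw [key1]
    have : (∫ ω, f ω * (W ω - c) ∂μ) = (∫ ω, f ω * W ω ∂μ) - ∫ ω, f ω * c ∂μ := by
      simp_rw [mul_sub]
      exact integral_sub hfW (hfint.mul_const c)
    rw [this, integral_mul_const]
  have e2 : (∫ ω, ξ ω * g ω ∂μ) - (∫ ω, ξ ω ∂μ) * c = ∫ ω, ξ ω * (W ω - c) ∂μ := by
    rw [key2]
    have : (∫ ω, ξ ω * (W ω - c) ∂μ) = (∫ ω, ξ ω * W ω ∂μ) - ∫ ω, ξ ω * c ∂μ := by
      simp_rw [mul_sub]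
      exact integral_sub hξW (hξint.mul_const c)
    rw [this, integral_mul_const]
  have e3 : ∀ ω, ξ ω * (W ω - c) = |W ω - c| := by
    intro ω
    by_cases hω : ω ∈ A
    · rw [hξ, sgn_mem hω, one_mul, abs_of_nonneg hω]
    · rw [hξ, sgn_not_mem hω]
      have : W ω - c < 0 := lt_of_not_ge hω
      rw [abs_of_neg this]; ring
  rw [e1, e2]
  calc |∫ ω, f ω * (W ω - c) ∂μ| ≤ ∫ ω, |f ω * (W ω - c)| ∂μ := by
        simpa only [Real.norm_eq_abs] using
          norm_integral_le_integral_norm (fun ω => f ω * (W ω - c))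
    _ ≤ ∫ ω, C * |W ω - c| ∂μ := by
        apply integral_mono_ae
          ((hfW.sub (hfint.mul_const c)).congr
            (Filter.Eventually.of_forall fun ω => by simp only [Pi.sub_apply]; ring)).abs
          (((hWint.sub (integrable_const c)).abs).const_mul C)
        filter_upwards [hC] with ω hω
        rw [abs_mul]
        exact mul_le_mul_of_nonneg_right hω (abs_nonneg _)
    _ = C * ∫ ω, |W ω - c| ∂μ := integral_const_mul C _
    _ = C * ∫ ω, ξ ω * (W ω - c) ∂μ := by
        congr 1
        exact (integral_congr_ae (Filter.Eventually.of_forall fun ω => (e3 ω).symm))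

private lemma ae_abs_le_eLpNormTop {Ω : Type*} {m : MeasurableSpace Ω} {μ : Measure Ω}
    {f : Ω → ℝ} {D : ℝ} (hD : ∀ ω, |f ω| ≤ D) :
    ∀ᵐ ω ∂μ, |f ω| ≤ (eLpNorm f ⊤ μ).toReal := by
  have hlt : eLpNormEssSup f μ < ⊤ :=
    eLpNormEssSup_lt_top_of_ae_bound (C := D)
      (Filter.Eventually.of_forall (by simpa [Real.norm_eq_abs] using hD))
  filter_upwards [ae_le_eLpNormEssSup (f := f) (μ := μ)] with ω hω
  have h2 := ENNReal.toReal_mono hlt.ne hω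
  rw [eLpNorm_exponent_top]
  simpa [Real.norm_eq_abs] using h2

theorem covariance_alpha_mixing_inequality
    {Ω : Type*} {m : MeasurableSpace Ω} {μ : Measure Ω} [IsProbabilityMeasure μ]
    (𝓕₁ 𝓕₂ : MeasurableSpace Ω) (h₁ : 𝓕₁ ≤ m) (h₂ : 𝓕₂ ≤ m)
    (Y Z : Ω → ℝ) (D : ℝ)
    (hYm : Measurable[𝓕₁] Y) (hZm : Measurable[𝓕₂] Z)
    (hYb : ∀ ω, |Y ω| ≤ D) (hZb : ∀ ω, |Z ω| ≤ D)
    (α : ℝ)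
    (hα : ∀ A B, MeasurableSet[𝓕₁] A → MeasurableSet[𝓕₂] B →
      |(μ (A ∩ B)).toReal - (μ A).toReal * (μ B).toReal| ≤ α) :
    |(∫ ω, Y ω * Z ω ∂μ) - (∫ ω, Y ω ∂μ) * ∫ ω, Z ω ∂μ| ≤
      4 * α * (eLpNorm Y ⊤ μ).toReal * (eLpNorm Z ⊤ μ).toReal := by
  letI : MeasurableSpace Ω := m
  set CY : ℝ := (eLpNorm Y ⊤ μ).toReal with hCY
  set CZ : ℝ := (eLpNorm Z ⊤ μ).toReal with hCZ
  have hCY0 : 0 ≤ CY := ENNReal.toReal_nonneg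
  have hCZ0 : 0 ≤ CZ := ENNReal.toReal_nonneg
  have hCYae : ∀ᵐ ω ∂μ, |Y ω| ≤ CY := ae_abs_le_eLpNormTop hYb
  have hCZae : ∀ᵐ ω ∂μ, |Z ω| ≤ CZ := ae_abs_le_eLpNormTop hZb
  have hZasm : AEStronglyMeasurable Z μ := (hZm.mono h₂ le_rfl).aestronglyMeasurable
  -- first application
  obtain ⟨A, hA, hbd1⟩ := cov_step h₁ hYm hZasm hCYae hZb
  have hξasm : AEStronglyMeasurable (sgn A) μ :=
    ((measurable_const.mul (measurable_one.indicator (h₁ A hA))).sub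
      measurable_const).aestronglyMeasurable
  -- second application
  obtain ⟨B, hB, hbd2⟩ := cov_step h₂ hZm hξasm hCZae (sgn_abs_le A)
  -- integrals of sign functions
  have hAm : MeasurableSet[m] A := h₁ A hA
  have hBm : MeasurableSet[m] B := h₂ B hB
  set a : ℝ := (μ A).toReal with ha
  set b : ℝ := (μ B).toReal with hb
  set c : ℝ := (μ (A ∩ B)).toReal with hc
  have hindA : Integrable (fun ω => A.indicator (1 : Ω → ℝ) ω) μ :=
    (integrable_const (1:ℝ)).indicator hAm
  have hindB : Integrable (fun ω => B.indicator (1 : Ω → ℝ) ω) μ :=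
    (integrable_const (1:ℝ)).indicator hBm
  have hindAB : Integrable (fun ω => (A ∩ B).indicator (1 : Ω → ℝ) ω) μ :=
    (integrable_const (1:ℝ)).indicator (hAm.inter hBm)
  have hIA : ∫ ω, sgn A ω ∂μ = 2 * a - 1 := by
    unfold sgn
    rw [integral_sub ((hindA.const_mul 2)) (integrable_const 1)]
    rw [integral_const_mul, integral_indicator_one hAm, integral_const]
    simp [ha, Measure.real]
  have hIB : ∫ ω, sgn B ω ∂μ = 2 * b - 1 := by
    unfold sgn
    rw [integral_sub ((hindB.const_mul 2)) (integrable_const 1)]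
    rw [integral_const_mul, integral_indicator_one hBm, integral_const]
    simp [hb, Measure.real]
  have hprod : ∀ ω, sgn B ω * sgn A ω =
      4 * (A ∩ B).indicator (1 : Ω → ℝ) ω - 2 * A.indicator (1 : Ω → ℝ) ω
        - 2 * B.indicator (1 : Ω → ℝ) ω + 1 := by
    intro ω
    by_cases hωA : ω ∈ A <;> by_cases hωB : ω ∈ B <;>
      simp [sgn_mem, sgn_not_mem, hωA, hωB, Set.indicator_apply, Set.mem_inter_iff] <;> ring
  have hIAB : ∫ ω, sgn B ω * sgn A ω ∂μ = 4 * c - 2 * a - 2 * b + 1 := by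
    rw [integral_congr_ae (Filter.Eventually.of_forall hprod)]
    have i2 : Integrable (fun ω => 4 * (A ∩ B).indicator (1 : Ω → ℝ) ω
        - 2 * A.indicator (1 : Ω → ℝ) ω) μ := (hindAB.const_mul 4).sub (hindA.const_mul 2)
    have i1 : Integrable (fun ω => 4 * (A ∩ B).indicator (1 : Ω → ℝ) ω
        - 2 * A.indicator (1 : Ω → ℝ) ω - 2 * B.indicator (1 : Ω → ℝ) ω) μ :=
      i2.sub (hindB.const_mul 2)
    rw [integral_add i1 (integrable_const 1)]
    rw [integral_sub i2 (hindB.const_mul 2)]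
    rw [integral_sub (hindAB.const_mul 4) (hindA.const_mul 2)]
    rw [integral_const_mul, integral_const_mul, integral_const_mul,
      integral_indicator_one hAm, integral_indicator_one hBm,
      integral_indicator_one (hAm.inter hBm), integral_const]
    simp [ha, hb, hc, Measure.real]
  -- final mixing bound
  have hfinal : (∫ ω, sgn B ω * sgn A ω ∂μ) -
      (∫ ω, sgn B ω ∂μ) * ∫ ω, sgn A ω ∂μ ≤ 4 * α := by
    rw [hIAB, hIB, hIA]
    have h4 : (4 * c - 2 * a - 2 * b + 1) - (2 * b - 1) * (2 * a - 1) = 4 * (c - a * b) := by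
      ring
    rw [h4]
    have := hα A B hA hB
    have habs : c - a * b ≤ α := le_trans (le_abs_self _) this
    linarith
  -- chain the inequalities
  have hcomm1 : (∫ ω, sgn A ω * Z ω ∂μ) = ∫ ω, Z ω * sgn A ω ∂μ := by
    apply integral_congr_ae (Filter.Eventually.of_forall fun ω => mul_comm _ _)
  have step1 : (∫ ω, sgn A ω * Z ω ∂μ) - (∫ ω, sgn A ω ∂μ) * ∫ ω, Z ω ∂μ ≤
      CZ * (4 * α) := by
    calc (∫ ω, sgn A ω * Z ω ∂μ) - (∫ ω, sgn A ω ∂μ) * ∫ ω, Z ω ∂μ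
        = (∫ ω, Z ω * sgn A ω ∂μ) - (∫ ω, Z ω ∂μ) * ∫ ω, sgn A ω ∂μ := by
          rw [hcomm1, mul_comm]
      _ ≤ |(∫ ω, Z ω * sgn A ω ∂μ) - (∫ ω, Z ω ∂μ) * ∫ ω, sgn A ω ∂μ| := le_abs_self _
      _ ≤ CZ * ((∫ ω, sgn B ω * sgn A ω ∂μ) -
            (∫ ω, sgn B ω ∂μ) * ∫ ω, sgn A ω ∂μ) := hbd2
      _ ≤ CZ * (4 * α) := mul_le_mul_of_nonneg_left hfinal hCZ0
  calc |(∫ ω, Y ω * Z ω ∂μ) - (∫ ω, Y ω ∂μ) * ∫ ω, Z ω ∂μ|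
      ≤ CY * ((∫ ω, sgn A ω * Z ω ∂μ) - (∫ ω, sgn A ω ∂μ) * ∫ ω, Z ω ∂μ) := hbd1
    _ ≤ CY * (CZ * (4 * α)) := mul_le_mul_of_nonneg_left step1 hCY0
    _ = 4 * α * CY * CZ := by ring
end

section
/- Let Y(j), j = 0,1,..., be random variables with |Y(j)| ≤ D, let (𝓕_{k,l}) be a family of σ-algebras increasing in the sense 𝓕_{k,l} ⊂ 𝓕_{k',l'} when k' ≤ k and l' ≥ l, define β(n) = sup_{j≥0} E|Y(j) − E(Y(j)|𝓕_{j−n,j+n})| and let α(n) be the α-mixing coefficient of the family (𝓕_{k,l}). Then for any integers 0 ≤ n₁ ≤ ... ≤ n_l < n_{l+1} ≤ ... ≤ n_m, with k = ⌊(n_{l+1} − n_l)/3⌋, one has |E∏_{i=1}^m Y(n_i) − E∏_{i=1}^l Y(n_i) · E∏_{i=l+1}^m Y(n_i)| ≤ 2(mβ(k) + 2α(k))·∏_{i=1}^m max(1, ‖Y(n_i)‖_∞). -/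
open MeasureTheory Finset
open scoped ENNReal NNReal

private lemma abs_prod_sub_prod_le {ι : Type*} (s : Finset ι) (f g c : ι → ℝ)
    (hc : ∀ i ∈ s, 1 ≤ c i) (hf : ∀ i ∈ s, |f i| ≤ c i) (hg : ∀ i ∈ s, |g i| ≤ c i) :
    |∏ i ∈ s, f i - ∏ i ∈ s, g i| ≤ (∑ i ∈ s, |f i - g i|) * ∏ i ∈ s, c i := by
  induction s using Finset.cons_induction with
  | empty => simp
  | cons a s ha ih =>
    simp only [Finset.prod_cons, Finset.sum_cons]
    have hca : 1 ≤ c a := hc a (Finset.mem_cons_self a s)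
    have hc' : ∀ i ∈ s, 1 ≤ c i := fun i hi => hc i (Finset.mem_cons.2 (Or.inr hi))
    have hf' : ∀ i ∈ s, |f i| ≤ c i := fun i hi => hf i (Finset.mem_cons.2 (Or.inr hi))
    have hg' : ∀ i ∈ s, |g i| ≤ c i := fun i hi => hg i (Finset.mem_cons.2 (Or.inr hi))
    have hPf : |∏ i ∈ s, f i| ≤ ∏ i ∈ s, c i := by
      rw [Finset.abs_prod]
      exact Finset.prod_le_prod (fun i _ => abs_nonneg _) hf'
    have hPc : (1 : ℝ) ≤ ∏ i ∈ s, c i := by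
      calc (1:ℝ) = ∏ _i ∈ s, (1:ℝ) := by simp
      _ ≤ ∏ i ∈ s, c i := Finset.prod_le_prod (fun _ _ => zero_le_one) hc'
    have hih := ih hc' hf' hg'
    have key : f a * ∏ i ∈ s, f i - g a * ∏ i ∈ s, g i
        = (f a - g a) * ∏ i ∈ s, f i + g a * (∏ i ∈ s, f i - ∏ i ∈ s, g i) := by ring
    rw [key]
    have h1 : |(f a - g a) * ∏ i ∈ s, f i + g a * (∏ i ∈ s, f i - ∏ i ∈ s, g i)|
        ≤ |f a - g a| * |∏ i ∈ s, f i| + |g a| * |∏ i ∈ s, f i - ∏ i ∈ s, g i| := by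
      refine (abs_add_le _ _).trans ?_
      rw [abs_mul, abs_mul]
    refine h1.trans ?_
    have hga : |g a| ≤ c a := hg a (Finset.mem_cons_self a s)
    have hS : (0 : ℝ) ≤ ∑ i ∈ s, |f i - g i| := Finset.sum_nonneg fun i _ => abs_nonneg _
    have hPc0 : (0:ℝ) ≤ ∏ i ∈ s, c i := zero_le_one.trans hPc
    have t1 : |f a - g a| * |∏ i ∈ s, f i| ≤ |f a - g a| * (c a * ∏ i ∈ s, c i) := by
      refine mul_le_mul_of_nonneg_left (hPf.trans ?_) (abs_nonneg _)
      nlinarith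
    have t2 : |g a| * |∏ i ∈ s, f i - ∏ i ∈ s, g i|
        ≤ c a * ((∑ i ∈ s, |f i - g i|) * ∏ i ∈ s, c i) :=
      mul_le_mul hga hih (abs_nonneg _) (zero_le_one.trans hca)
    calc |f a - g a| * |∏ i ∈ s, f i| + |g a| * |∏ i ∈ s, f i - ∏ i ∈ s, g i|
        ≤ |f a - g a| * (c a * ∏ i ∈ s, c i) + c a * ((∑ i ∈ s, |f i - g i|) * ∏ i ∈ s, c i) :=
          add_le_add t1 t2
      _ = (|f a - g a| + ∑ i ∈ s, |f i - g i|) * (c a * ∏ i ∈ s, c i) := by ring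

private lemma abs_mul_sub_mul_le {p1 q1 p2 q2 b1 b2 e1 e2 : ℝ}
    (h1 : |p1 - q1| ≤ e1) (h2 : |p2 - q2| ≤ e2) (hb1 : |p1| ≤ b1) (hb2 : |q2| ≤ b2) :
    |q1 * q2 - p1 * p2| ≤ e1 * b2 + b1 * e2 := by
  have key : q1 * q2 - p1 * p2 = (q1 - p1) * q2 + p1 * (q2 - p2) := by ring
  rw [key]
  have habs : |(q1 - p1) * q2 + p1 * (q2 - p2)|
      ≤ |q1 - p1| * |q2| + |p1| * |q2 - p2| := by
    refine (abs_add_le _ _).trans ?_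
    rw [abs_mul, abs_mul]
  refine habs.trans ?_
  have h1' : |q1 - p1| ≤ e1 := by rwa [abs_sub_comm]
  have h2' : |q2 - p2| ≤ e2 := by rwa [abs_sub_comm]
  have := mul_le_mul h1' hb2 (abs_nonneg _) ((abs_nonneg _).trans h1')
  have := mul_le_mul hb1 h2' (abs_nonneg _) ((abs_nonneg _).trans hb1)
  linarith

private lemma integrable_of_abs_le {Ω : Type*} {m0 : MeasurableSpace Ω} {μ : Measure Ω}
    [IsFiniteMeasure μ] {f : Ω → ℝ} (hf : AEStronglyMeasurable f μ) {c : ℝ}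
    (hb : ∀ᵐ ω ∂μ, |f ω| ≤ c) : Integrable f μ :=
  ⟨hf, HasFiniteIntegral.of_bounded (C := c) (by simpa [Real.norm_eq_abs] using hb)⟩

private lemma integral_mul_eq_integral_mul_condexp {Ω : Type*} {m0 : MeasurableSpace Ω}
    {μ : Measure Ω} [IsProbabilityMeasure μ] {m : MeasurableSpace Ω} (hm : m ≤ m0)
    {φ h : Ω → ℝ} (hφ : StronglyMeasurable[m] φ) {cφ : ℝ}
    (hφb : ∀ᵐ ω ∂μ, |φ ω| ≤ cφ) (hh : Integrable h μ) :
    ∫ ω, φ ω * h ω ∂μ = ∫ ω, φ ω * (μ[h|m]) ω ∂μ := by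
  have hφm0 : AEStronglyMeasurable[m0] φ μ := (hφ.mono hm).aestronglyMeasurable
  have hint : Integrable (φ * h) μ :=
    hh.bdd_mul hφm0 (by simpa [Real.norm_eq_abs] using hφb)
  have h1 : ∫ ω, (φ * h) ω ∂μ = ∫ ω, (μ[(φ * h)|m]) ω ∂μ := (integral_condExp hm).symm
  have h2 : μ[(φ * h)|m] =ᵐ[μ] φ * μ[h|m] := condExp_mul_of_stronglyMeasurable_left hφ hint hh
  calc ∫ ω, φ ω * h ω ∂μ = ∫ ω, (φ * h) ω ∂μ := rfl
    _ = ∫ ω, (μ[(φ * h)|m]) ω ∂μ := h1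
    _ = ∫ ω, (φ * μ[h|m]) ω ∂μ := integral_congr_ae h2
    _ = ∫ ω, φ ω * (μ[h|m]) ω ∂μ := rfl

private lemma sign_reduce {Ω : Type*} {m0 : MeasurableSpace Ω} {μ : Measure Ω}
    [IsProbabilityMeasure μ] {m : MeasurableSpace Ω} (hm : m ≤ m0)
    (h : Ω → ℝ) (hh : Integrable h μ) :
    ∃ s : Ω → ℝ, StronglyMeasurable[m] s ∧
      (∃ A : Set Ω, MeasurableSet[m] A ∧
        ∀ ω, (ω ∈ A → s ω = 1) ∧ (ω ∉ A → s ω = -1)) ∧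
      0 ≤ ∫ ω, s ω * h ω ∂μ ∧
      ∀ (φ : Ω → ℝ) (cφ : ℝ), StronglyMeasurable[m] φ → (∀ᵐ ω ∂μ, |φ ω| ≤ cφ) →
        |∫ ω, φ ω * h ω ∂μ| ≤ cφ * ∫ ω, s ω * h ω ∂μ := by
  classical
  set g : Ω → ℝ := μ[h|m] with hg_def
  have hgsm : StronglyMeasurable[m] g := stronglyMeasurable_condExp
  have hgint : Integrable g μ := integrable_condExp
  set A : Set Ω := {ω | 0 ≤ g ω} with hA_def
  have hAmeas : MeasurableSet[m] A := hgsm.measurable measurableSet_Ici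
  set s : Ω → ℝ := fun ω => if ω ∈ A then (1:ℝ) else -1 with hs_def
  have hsm : StronglyMeasurable[m] s :=
    (Measurable.ite hAmeas measurable_const measurable_const).stronglyMeasurable
  have hs_abs : ∀ ω, |s ω| ≤ 1 := by
    intro ω; by_cases h0 : ω ∈ A <;> simp [hs_def, h0]
  have hs_mul_g : ∀ ω, s ω * g ω = |g ω| := by
    intro ω
    by_cases h0 : ω ∈ A
    · have : 0 ≤ g ω := h0
      simp [hs_def, h0, abs_of_nonneg this]
    · have : g ω < 0 := lt_of_not_ge h0
      simp [hs_def, h0, abs_of_neg this]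
  have hsh : ∫ ω, s ω * h ω ∂μ = ∫ ω, |g ω| ∂μ := by
    rw [integral_mul_eq_integral_mul_condexp hm hsm (cφ := 1) (ae_of_all _ hs_abs) hh]
    exact integral_congr_ae (ae_of_all _ fun ω => hs_mul_g ω)
  refine ⟨s, hsm, ⟨A, hAmeas, fun ω => ⟨fun h0 => by simp [hs_def, h0],
    fun h0 => by simp [hs_def, h0]⟩⟩, ?_, ?_⟩
  · rw [hsh]; exact integral_nonneg fun ω => abs_nonneg _
  · intro φ cφ hφ hφb
    rw [hsh, integral_mul_eq_integral_mul_condexp hm hφ hφb hh]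
    have hcφ0 : 0 ≤ cφ := by
      have hne : (Filter.NeBot (ae μ)) := ae_neBot.2 (IsProbabilityMeasure.ne_zero μ)
      obtain ⟨ω, hω⟩ := hφb.exists
      exact (abs_nonneg _).trans hω
    have h1 : |∫ ω, φ ω * g ω ∂μ| ≤ ∫ ω, |φ ω * g ω| ∂μ := by
      have := norm_integral_le_integral_norm (μ := μ) (f := fun ω => φ ω * g ω)
      simp only [Real.norm_eq_abs] at this
      exact this
    refine h1.trans ?_
    have h2 : ∫ ω, |φ ω * g ω| ∂μ ≤ ∫ ω, cφ * |g ω| ∂μ := by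
      refine integral_mono_ae ?_ (hgint.abs.const_mul cφ) ?_
      · have : Integrable (fun ω => φ ω * g ω) μ :=
          hgint.bdd_mul (hφ.mono hm).aestronglyMeasurable
            (by simpa [Real.norm_eq_abs] using hφb)
        exact this.abs
      · filter_upwards [hφb] with ω hω
        rw [abs_mul]
        exact mul_le_mul_of_nonneg_right hω (abs_nonneg _)
    refine h2.trans ?_
    rw [integral_const_mul]

private lemma cov_bound {Ω : Type*} {m0 : MeasurableSpace Ω} {μ : Measure Ω}
    [IsProbabilityMeasure μ] {mA mB : MeasurableSpace Ω} (hA : mA ≤ m0) (hB : mB ≤ m0)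
    {ξ η : Ω → ℝ} (hξ : StronglyMeasurable[mA] ξ) (hη : StronglyMeasurable[mB] η)
    {a b : ℝ} (ha : 0 ≤ a) (hb : 0 ≤ b)
    (hξb : ∀ᵐ ω ∂μ, |ξ ω| ≤ a) (hηb : ∀ᵐ ω ∂μ, |η ω| ≤ b)
    {α0 : ℝ} (hα : ∀ A B : Set Ω, MeasurableSet[mA] A → MeasurableSet[mB] B →
      |(μ (A ∩ B)).toReal - (μ A).toReal * (μ B).toReal| ≤ α0) :
    |(∫ ω, ξ ω * η ω ∂μ) - (∫ ω, ξ ω ∂μ) * ∫ ω, η ω ∂μ| ≤ 4 * a * b * α0 := by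
  have hξm0 : AEStronglyMeasurable[m0] ξ μ := (hξ.mono hA).aestronglyMeasurable
  have hηm0 : AEStronglyMeasurable[m0] η μ := (hη.mono hB).aestronglyMeasurable
  have hξint : Integrable ξ μ := integrable_of_abs_le hξm0 hξb
  have hηint : Integrable η μ := integrable_of_abs_le hηm0 hηb
  have hξηint : Integrable (fun ω => ξ ω * η ω) μ :=
    hηint.bdd_mul hξm0 (by simpa [Real.norm_eq_abs] using hξb)
  set Eη := ∫ ω, η ω ∂μ with hEη_def
  set h : Ω → ℝ := fun ω => η ω - Eη with hh_def
  have hhint : Integrable h μ := hηint.sub (integrable_const _)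
  obtain ⟨s, hsm, ⟨A, hAmeas, hsA⟩, hsh0, hsbound⟩ := sign_reduce hA h hhint
  have e1 : ∫ ω, ξ ω * h ω ∂μ = (∫ ω, ξ ω * η ω ∂μ) - (∫ ω, ξ ω ∂μ) * Eη := by
    have e1a : (fun ω => ξ ω * h ω) = fun ω => ξ ω * η ω - ξ ω * Eη := by
      funext ω; simp [hh_def]; ring
    rw [e1a, integral_sub hξηint (hξint.mul_const Eη), integral_mul_const]
  have hs_abs : ∀ ω, |s ω| ≤ 1 := by
    intro ω
    by_cases h0 : ω ∈ A
    · rw [(hsA ω).1 h0]; norm_num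
    · rw [(hsA ω).2 h0]; norm_num
  have hsint : Integrable s μ :=
    integrable_of_abs_le (hsm.mono hA).aestronglyMeasurable (ae_of_all _ hs_abs)
  have bound1 : |∫ ω, ξ ω * h ω ∂μ| ≤ a * ∫ ω, s ω * h ω ∂μ := hsbound ξ a hξ hξb
  -- second stage
  set Es := ∫ ω, s ω ∂μ with hEs_def
  set h' : Ω → ℝ := fun ω => s ω - Es with hh'_def
  have hh'int : Integrable h' μ := hsint.sub (integrable_const _)
  obtain ⟨t, htm, ⟨B, hBmeas, htB⟩, hth0, htbound⟩ := sign_reduce hB h' hh'int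
  have ht_abs : ∀ ω, |t ω| ≤ 1 := by
    intro ω
    by_cases h0 : ω ∈ B
    · rw [(htB ω).1 h0]; norm_num
    · rw [(htB ω).2 h0]; norm_num
  have htint : Integrable t μ :=
    integrable_of_abs_le (htm.mono hB).aestronglyMeasurable (ae_of_all _ ht_abs)
  have hsηint : Integrable (fun ω => s ω * η ω) μ :=
    hηint.bdd_mul (hsm.mono hA).aestronglyMeasurable
      (by simpa [Real.norm_eq_abs] using ae_of_all μ hs_abs)
  have e2 : ∫ ω, s ω * h ω ∂μ = ∫ ω, η ω * h' ω ∂μ := by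
    have e2a : (fun ω => s ω * h ω) = fun ω => s ω * η ω - s ω * Eη := by
      funext ω; simp [hh_def]; ring
    have e2b : (fun ω => η ω * h' ω) = fun ω => s ω * η ω - η ω * Es := by
      funext ω; simp [hh'_def]; ring
    rw [e2a, e2b, integral_sub hsηint (hsint.mul_const Eη),
      integral_sub hsηint (hηint.mul_const Es), integral_mul_const, integral_mul_const]
    simp only [← hEs_def, ← hEη_def]
    ring
  have bound2 : |∫ ω, η ω * h' ω ∂μ| ≤ b * ∫ ω, t ω * h' ω ∂μ := htbound η b hη hηb
  -- compute ∫ t h'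
  have hAm0 : MeasurableSet[m0] A := hA _ hAmeas
  have hBm0 : MeasurableSet[m0] B := hB _ hBmeas
  set iA : Ω → ℝ := A.indicator (1 : Ω → ℝ) with hiA_def
  set iB : Ω → ℝ := B.indicator (1 : Ω → ℝ) with hiB_def
  set iAB : Ω → ℝ := (A ∩ B).indicator (1 : Ω → ℝ) with hiAB_def
  have intA : Integrable iA μ := Integrable.indicator (μ := μ) (s := A) (integrable_const (1:ℝ)) hAm0
  have intB : Integrable iB μ := Integrable.indicator (μ := μ) (s := B) (integrable_const (1:ℝ)) hBm0
  have intAB : Integrable iAB μ := Integrable.indicator (μ := μ) (s := A ∩ B) (integrable_const (1:ℝ)) (hAm0.inter hBm0)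
  set p := (μ A).toReal with hp_def
  set q := (μ B).toReal with hq_def
  set r := (μ (A ∩ B)).toReal with hr_def
  have hiA_int : ∫ ω, iA ω ∂μ = p := @integral_indicator_one Ω m0 μ A hAm0
  have hiB_int : ∫ ω, iB ω ∂μ = q := @integral_indicator_one Ω m0 μ B hBm0
  have hiAB_int : ∫ ω, iAB ω ∂μ = r := @integral_indicator_one Ω m0 μ (A ∩ B) (hAm0.inter hBm0)
  have hs_eq : ∀ ω, s ω = 2 * iA ω - 1 := by
    intro ω
    by_cases h0 : ω ∈ A
    · rw [(hsA ω).1 h0]; norm_num [hiA_def, Set.indicator_of_mem h0]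
    · rw [(hsA ω).2 h0]; norm_num [hiA_def, Set.indicator_of_notMem h0]
  have ht_eq : ∀ ω, t ω = 2 * iB ω - 1 := by
    intro ω
    by_cases h0 : ω ∈ B
    · rw [(htB ω).1 h0]; norm_num [hiB_def, Set.indicator_of_mem h0]
    · rw [(htB ω).2 h0]; norm_num [hiB_def, Set.indicator_of_notMem h0]
  have hEs : Es = 2 * p - 1 := by
    rw [hEs_def, show s = fun ω => 2 * iA ω - 1 from funext hs_eq,
      integral_sub (intA.const_mul 2) (integrable_const 1), integral_const_mul, hiA_int,
      integral_const]
    simp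
  have hEt : ∫ ω, t ω ∂μ = 2 * q - 1 := by
    rw [show t = fun ω => 2 * iB ω - 1 from funext ht_eq,
      integral_sub (intB.const_mul 2) (integrable_const 1), integral_const_mul, hiB_int,
      integral_const]
    simp
  have hts_eq : ∀ ω, t ω * s ω = 4 * iAB ω - 2 * iA ω - 2 * iB ω + 1 := by
    intro ω
    rw [hs_eq ω, ht_eq ω]
    by_cases hA0 : ω ∈ A <;> by_cases hB0 : ω ∈ B <;>
      simp [hiA_def, hiB_def, hiAB_def, Set.indicator_apply, Set.mem_inter_iff, hA0, hB0] <;>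
      ring
  have hts : ∫ ω, t ω * s ω ∂μ = 4 * r - 2 * p - 2 * q + 1 := by
    rw [show (fun ω => t ω * s ω) = fun ω => 4 * iAB ω - 2 * iA ω - 2 * iB ω + 1 from
      funext hts_eq]
    have intF : Integrable (fun ω => 4 * iAB ω - 2 * iA ω - 2 * iB ω) μ :=
      ((intAB.const_mul 4).sub (intA.const_mul 2)).sub (intB.const_mul 2)
    have intF2 : Integrable (fun ω => 4 * iAB ω - 2 * iA ω) μ :=
      (intAB.const_mul 4).sub (intA.const_mul 2)
    rw [integral_add intF (integrable_const 1),
      integral_sub intF2 (intB.const_mul 2),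
      integral_sub (intAB.const_mul 4) (intA.const_mul 2),
      integral_const_mul, integral_const_mul, integral_const_mul, hiA_int, hiB_int, hiAB_int,
      integral_const]
    simp
  have htsint : Integrable (fun ω => t ω * s ω) μ :=
    hsint.bdd_mul (htm.mono hB).aestronglyMeasurable
      (by simpa [Real.norm_eq_abs] using ae_of_all μ ht_abs)
  have hth' : ∫ ω, t ω * h' ω ∂μ = 4 * (r - p * q) := by
    have : (fun ω => t ω * h' ω) = fun ω => t ω * s ω - t ω * Es := by
      funext ω; simp [hh'_def]; ring
    rw [this, integral_sub htsint (htint.mul_const Es), integral_mul_const, hts, hEt, hEs]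
    ring
  have hrpq : |r - p * q| ≤ α0 := hα A B hAmeas hBmeas
  have hth'le : ∫ ω, t ω * h' ω ∂μ ≤ 4 * α0 := by
    rw [hth']
    have := le_abs_self (r - p * q)
    linarith
  -- assemble
  have hsh_le : ∫ ω, s ω * h ω ∂μ ≤ b * (4 * α0) := by
    rw [e2]
    refine (le_abs_self _).trans (bound2.trans ?_)
    exact mul_le_mul_of_nonneg_left hth'le hb
  have final : |∫ ω, ξ ω * h ω ∂μ| ≤ a * (b * (4 * α0)) :=
    bound1.trans (mul_le_mul_of_nonneg_left hsh_le ha)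
  rw [e1] at final
  calc |(∫ ω, ξ ω * η ω ∂μ) - (∫ ω, ξ ω ∂μ) * ∫ ω, η ω ∂μ|
      = |(∫ ω, ξ ω * η ω ∂μ) - (∫ ω, ξ ω ∂μ) * Eη| := by rw [hEη_def]
    _ ≤ a * (b * (4 * α0)) := final
    _ = 4 * a * b * α0 := by ring

/-- Splitting Lemma 3.1: for bounded random variables `Y j` and a family of
σ-algebras `F k l` (with `k ∈ WithBot ℤ`, `l ∈ WithTop ℤ`) increasing in the sense
that `F k l ≤ F k' l'` whenever `k' ≤ k` and `l ≤ l'`, with α-mixing coefficient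
bounded by `α` and approximation coefficient bounded by `β`, the expectation of a
product splits up to an error controlled by `α` and `β` at the gap. -/
theorem splitting_lemma
    {Ω : Type*} {m0 : MeasurableSpace Ω} {μ : Measure Ω} [IsProbabilityMeasure μ]
    (F : WithBot ℤ → WithTop ℤ → MeasurableSpace Ω)
    (hFle : ∀ k l, F k l ≤ m0)
    (hFmono : ∀ (k k' : WithBot ℤ) (l l' : WithTop ℤ), k' ≤ k → l ≤ l' → F k l ≤ F k' l')
    (Y : ℕ → Ω → ℝ) (D : ℝ) (hYmeas : ∀ j, Measurable (Y j))
    (hYb : ∀ j ω, |Y j ω| ≤ D)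
    (α β : ℕ → ℝ)
    (hα : ∀ (k n : ℕ) (A B : Set Ω), MeasurableSet[F ⊥ (k : ℤ)] A →
      MeasurableSet[F ((k + n : ℕ) : ℤ) ⊤] B →
      |(μ (A ∩ B)).toReal - (μ A).toReal * (μ B).toReal| ≤ α n)
    (hβ : ∀ (j n : ℕ),
      ∫ ω, |Y j ω - (μ[Y j| F ((j : ℤ) - (n : ℤ)) ((j : ℤ) + (n : ℤ))]) ω| ∂μ ≤ β n)
    (ns : ℕ → ℕ) (hns : Monotone ns) (M l : ℕ) (hl : 1 ≤ l) (hlM : l < M)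
    (hgap : ns (l - 1) < ns l) :
    |(∫ ω, ∏ i ∈ range M, Y (ns i) ω ∂μ) -
        (∫ ω, ∏ i ∈ range l, Y (ns i) ω ∂μ) * ∫ ω, ∏ i ∈ Ico l M, Y (ns i) ω ∂μ| ≤
      2 * (M * β ((ns l - ns (l - 1)) / 3) + 2 * α ((ns l - ns (l - 1)) / 3)) *
        ∏ i ∈ range M, max 1 (eLpNorm (Y (ns i)) ⊤ μ).toReal := by
  set k := (ns l - ns (l - 1)) / 3 with hk_def
  set Z : ℕ → Ω → ℝ :=
    fun i => μ[Y (ns i)| F ((ns i : ℤ) - (k : ℤ)) ((ns i : ℤ) + (k : ℤ))] with hZ_def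
  set c : ℕ → ℝ := fun i => max 1 (eLpNorm (Y (ns i)) ⊤ μ).toReal with hc_def
  have hc1 : ∀ i, (1 : ℝ) ≤ c i := fun i => le_max_left _ _
  have hc0 : ∀ i, (0 : ℝ) ≤ c i := fun i => zero_le_one.trans (hc1 i)
  have hprodc_nonneg : ∀ s : Finset ℕ, (0 : ℝ) ≤ ∏ i ∈ s, c i :=
    fun s => Finset.prod_nonneg fun i _ => hc0 i
  -- a.e. bounds
  have hYae : ∀ j, ∀ᵐ ω ∂μ, |Y j ω| ≤ (eLpNorm (Y j) ⊤ μ).toReal := by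
    intro j
    have hmem : MemLp (Y j) ⊤ μ := memLp_top_of_bound (hYmeas j).aestronglyMeasurable D
      (ae_of_all _ fun ω => by simpa [Real.norm_eq_abs] using hYb j ω)
    have hfin : eLpNorm (Y j) ⊤ μ ≠ ⊤ := hmem.eLpNorm_ne_top
    filter_upwards [ae_le_eLpNormEssSup (f := Y j) (μ := μ)] with ω hω
    have h2 : ((‖Y j ω‖₊ : ℝ≥0∞)).toReal ≤ (eLpNormEssSup (Y j) μ).toReal :=
      ENNReal.toReal_mono (by rwa [eLpNorm_exponent_top] at hfin) hω
    rw [eLpNorm_exponent_top]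
    simpa [Real.norm_eq_abs] using h2
  have hYc : ∀ i, ∀ᵐ ω ∂μ, |Y (ns i) ω| ≤ c i := by
    intro i
    filter_upwards [hYae (ns i)] with ω hω
    exact hω.trans (le_max_right 1 _)
  have hZc : ∀ i, ∀ᵐ ω ∂μ, |Z i ω| ≤ c i := by
    intro i
    have hb' : ∀ᵐ ω ∂μ, |Y (ns i) ω| ≤ ((c i).toNNReal : ℝ) := by
      rw [Real.coe_toNNReal _ (hc0 i)]; exact hYc i
    have h := ae_bdd_condExp_of_ae_bdd
      (m := F ((ns i : ℤ) - (k : ℤ)) ((ns i : ℤ) + (k : ℤ))) hb'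
    have hZi : Z i = μ[Y (ns i)| F ((ns i : ℤ) - (k : ℤ)) ((ns i : ℤ) + (k : ℤ))] := by
      rw [hZ_def]
    rw [← hZi] at h
    rw [Real.coe_toNNReal _ (hc0 i)] at h
    exact h
  have hallae : ∀ᵐ ω ∂μ, ∀ i, |Y (ns i) ω| ≤ c i ∧ |Z i ω| ≤ c i :=
    ae_all_iff.2 fun i => (hYc i).and (hZc i)
  -- integrability
  have hYint : ∀ i, Integrable (Y (ns i)) μ := fun i =>
    integrable_of_abs_le (hYmeas (ns i)).aestronglyMeasurable (ae_of_all _ (hYb (ns i)))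
  have hZint : ∀ i, Integrable (Z i) μ := fun i => by
    have hZi : Z i = μ[Y (ns i)| F ((ns i : ℤ) - (k : ℤ)) ((ns i : ℤ) + (k : ℤ))] := by
      rw [hZ_def]
    rw [hZi]; exact integrable_condExp
  have hZmeas : ∀ i, Measurable (Z i) := fun i => by
    have hZi : Z i = μ[Y (ns i)| F ((ns i : ℤ) - (k : ℤ)) ((ns i : ℤ) + (k : ℤ))] := by
      rw [hZ_def]
    rw [hZi]
    exact (stronglyMeasurable_condExp.mono (hFle _ _)).measurable
  have hYprod_ae : ∀ s : Finset ℕ, ∀ᵐ ω ∂μ, |∏ i ∈ s, Y (ns i) ω| ≤ ∏ i ∈ s, c i := by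
    intro s
    filter_upwards [hallae] with ω hω
    rw [Finset.abs_prod]
    exact Finset.prod_le_prod (fun i _ => abs_nonneg _) (fun i _ => (hω i).1)
  have hZprod_ae : ∀ s : Finset ℕ, ∀ᵐ ω ∂μ, |∏ i ∈ s, Z i ω| ≤ ∏ i ∈ s, c i := by
    intro s
    filter_upwards [hallae] with ω hω
    rw [Finset.abs_prod]
    exact Finset.prod_le_prod (fun i _ => abs_nonneg _) (fun i _ => (hω i).2)
  have hYprod_int : ∀ s : Finset ℕ, Integrable (fun ω => ∏ i ∈ s, Y (ns i) ω) μ := fun s =>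
    integrable_of_abs_le
      (Finset.measurable_prod s fun i _ => hYmeas (ns i)).aestronglyMeasurable (hYprod_ae s)
  have hZprod_int : ∀ s : Finset ℕ, Integrable (fun ω => ∏ i ∈ s, Z i ω) μ := fun s =>
    integrable_of_abs_le
      (Finset.measurable_prod s fun i _ => hZmeas i).aestronglyMeasurable (hZprod_ae s)
  have hβ' : ∀ i, ∫ ω, |Y (ns i) ω - Z i ω| ∂μ ≤ β k := fun i => by
    have hZi : Z i = μ[Y (ns i)| F ((ns i : ℤ) - (k : ℤ)) ((ns i : ℤ) + (k : ℤ))] := by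
      rw [hZ_def]
    rw [hZi]; exact hβ (ns i) k
  -- key telescoping bound
  have keyA : ∀ s : Finset ℕ,
      |(∫ ω, ∏ i ∈ s, Y (ns i) ω ∂μ) - ∫ ω, ∏ i ∈ s, Z i ω ∂μ|
        ≤ (s.card : ℝ) * β k * ∏ i ∈ s, c i := by
    intro s
    have hintabs : ∀ i ∈ s, Integrable (fun ω => |Y (ns i) ω - Z i ω|) μ :=
      fun i _ => ((hYint i).sub (hZint i)).abs
    have hdiffint : Integrable (fun ω => ∏ i ∈ s, Y (ns i) ω - ∏ i ∈ s, Z i ω) μ :=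
      (hYprod_int s).sub (hZprod_int s)
    have step1 : |(∫ ω, ∏ i ∈ s, Y (ns i) ω ∂μ) - ∫ ω, ∏ i ∈ s, Z i ω ∂μ|
        ≤ ∫ ω, |∏ i ∈ s, Y (ns i) ω - ∏ i ∈ s, Z i ω| ∂μ := by
      rw [← integral_sub (hYprod_int s) (hZprod_int s)]
      have := norm_integral_le_integral_norm (μ := μ)
        (f := fun ω => ∏ i ∈ s, Y (ns i) ω - ∏ i ∈ s, Z i ω)
      simpa [Real.norm_eq_abs] using this
    have hint2 : Integrable
        (fun ω => (∑ i ∈ s, |Y (ns i) ω - Z i ω|) * ∏ i ∈ s, c i) μ :=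
      (integrable_finset_sum s hintabs).mul_const _
    have step2 : ∫ ω, |∏ i ∈ s, Y (ns i) ω - ∏ i ∈ s, Z i ω| ∂μ
        ≤ ∫ ω, (∑ i ∈ s, |Y (ns i) ω - Z i ω|) * ∏ i ∈ s, c i ∂μ := by
      refine integral_mono_ae hdiffint.abs hint2 ?_
      filter_upwards [hallae] with ω hω
      exact abs_prod_sub_prod_le s _ _ c (fun i _ => hc1 i)
        (fun i _ => (hω i).1) (fun i _ => (hω i).2)
    have step3 : ∫ ω, (∑ i ∈ s, |Y (ns i) ω - Z i ω|) * ∏ i ∈ s, c i ∂μ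
        = (∑ i ∈ s, ∫ ω, |Y (ns i) ω - Z i ω| ∂μ) * ∏ i ∈ s, c i := by
      rw [integral_mul_const, integral_finset_sum s hintabs]
    have step4 : (∑ i ∈ s, ∫ ω, |Y (ns i) ω - Z i ω| ∂μ) * ∏ i ∈ s, c i
        ≤ (s.card : ℝ) * β k * ∏ i ∈ s, c i := by
      have h1 : ∑ i ∈ s, ∫ ω, |Y (ns i) ω - Z i ω| ∂μ ≤ (s.card : ℝ) * β k := by
        calc ∑ i ∈ s, ∫ ω, |Y (ns i) ω - Z i ω| ∂μ ≤ ∑ _i ∈ s, β k :=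
              Finset.sum_le_sum fun i _ => hβ' i
          _ = (s.card : ℝ) * β k := by rw [Finset.sum_const, nsmul_eq_mul]
      exact mul_le_mul_of_nonneg_right h1 (hprodc_nonneg s)
    calc |(∫ ω, ∏ i ∈ s, Y (ns i) ω ∂μ) - ∫ ω, ∏ i ∈ s, Z i ω ∂μ|
        ≤ ∫ ω, |∏ i ∈ s, Y (ns i) ω - ∏ i ∈ s, Z i ω| ∂μ := step1
      _ ≤ ∫ ω, (∑ i ∈ s, |Y (ns i) ω - Z i ω|) * ∏ i ∈ s, c i ∂μ := step2
      _ = (∑ i ∈ s, ∫ ω, |Y (ns i) ω - Z i ω| ∂μ) * ∏ i ∈ s, c i := step3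
      _ ≤ (s.card : ℝ) * β k * ∏ i ∈ s, c i := step4
  -- product splitting
  have hsplit : ∀ (f : ℕ → Ω → ℝ) (ω : Ω),
      ∏ i ∈ range M, f i ω = (∏ i ∈ range l, f i ω) * ∏ i ∈ Ico l M, f i ω := by
    intro f ω
    simp only [Finset.range_eq_Ico]
    exact (Finset.prod_Ico_consecutive _ (Nat.zero_le l) hlM.le).symm
  have hsplitc : ∏ i ∈ range M, c i = (∏ i ∈ range l, c i) * ∏ i ∈ Ico l M, c i := by
    simp only [Finset.range_eq_Ico]
    exact (Finset.prod_Ico_consecutive _ (Nat.zero_le l) hlM.le).symm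
  -- covariance step
  have h3k : ns (l - 1) + 3 * k ≤ ns l := by
    have := Nat.div_mul_le_self (ns l - ns (l - 1)) 3
    omega
  have hmAle : ∀ i ∈ range l, F ((ns i : ℤ) - (k : ℤ)) ((ns i : ℤ) + (k : ℤ))
      ≤ F ⊥ ((ns (l - 1) + k : ℕ) : ℤ) := by
    intro i hi
    refine hFmono _ _ _ _ bot_le ?_
    have hii : ns i ≤ ns (l - 1) := hns (by simp only [Finset.mem_range] at hi; omega)
    exact WithTop.coe_le_coe.2 (by push_cast; omega)
  have hmBle : ∀ i ∈ Ico l M, F ((ns i : ℤ) - (k : ℤ)) ((ns i : ℤ) + (k : ℤ))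
      ≤ F ((ns (l - 1) + k + k : ℕ) : ℤ) ⊤ := by
    intro i hi
    refine hFmono _ _ _ _ ?_ le_top
    have hii : ns l ≤ ns i := hns (Finset.mem_Ico.1 hi).1
    exact WithBot.coe_le_coe.2 (by push_cast; omega)
  have hξsm : StronglyMeasurable[F ⊥ ((ns (l - 1) + k : ℕ) : ℤ)]
      (fun ω => ∏ i ∈ range l, Z i ω) := by
    refine Measurable.stronglyMeasurable ?_
    refine Finset.measurable_prod _ fun i hi => ?_
    have hZi : Z i = μ[Y (ns i)| F ((ns i : ℤ) - (k : ℤ)) ((ns i : ℤ) + (k : ℤ))] := by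
      rw [hZ_def]
    rw [hZi]
    exact (stronglyMeasurable_condExp.mono (hmAle i hi)).measurable
  have hηsm : StronglyMeasurable[F ((ns (l - 1) + k + k : ℕ) : ℤ) ⊤]
      (fun ω => ∏ i ∈ Ico l M, Z i ω) := by
    refine Measurable.stronglyMeasurable ?_
    refine Finset.measurable_prod _ fun i hi => ?_
    have hZi : Z i = μ[Y (ns i)| F ((ns i : ℤ) - (k : ℤ)) ((ns i : ℤ) + (k : ℤ))] := by
      rw [hZ_def]
    rw [hZi]
    exact (stronglyMeasurable_condExp.mono (hmBle i hi)).measurable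
  have T2 : |(∫ ω, (∏ i ∈ range l, Z i ω) * ∏ i ∈ Ico l M, Z i ω ∂μ)
      - (∫ ω, ∏ i ∈ range l, Z i ω ∂μ) * ∫ ω, ∏ i ∈ Ico l M, Z i ω ∂μ|
      ≤ 4 * (∏ i ∈ range l, c i) * (∏ i ∈ Ico l M, c i) * α k :=
    cov_bound (hFle _ _) (hFle _ _) hξsm hηsm
      (hprodc_nonneg (range l)) (hprodc_nonneg (Ico l M))
      (hZprod_ae (range l)) (hZprod_ae (Ico l M))
      (hα (ns (l - 1) + k) k)
  have hQeq : ∫ ω, ∏ i ∈ range M, Z i ω ∂μ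
      = ∫ ω, (∏ i ∈ range l, Z i ω) * ∏ i ∈ Ico l M, Z i ω ∂μ :=
    integral_congr_ae (ae_of_all _ fun ω => hsplit Z ω)
  -- bounds on |∫ products|
  have habsY : |∫ ω, ∏ i ∈ range l, Y (ns i) ω ∂μ| ≤ ∏ i ∈ range l, c i := by
    have h1 := norm_integral_le_integral_norm (μ := μ)
      (f := fun ω => ∏ i ∈ range l, Y (ns i) ω)
    simp only [Real.norm_eq_abs] at h1
    refine h1.trans ?_
    have h2 : ∫ ω, |∏ i ∈ range l, Y (ns i) ω| ∂μ ≤ ∫ _ω, (∏ i ∈ range l, c i) ∂μ :=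
      integral_mono_ae (hYprod_int (range l)).abs (integrable_const _) (hYprod_ae (range l))
    simpa using h2
  have habsZ : |∫ ω, ∏ i ∈ Ico l M, Z i ω ∂μ| ≤ ∏ i ∈ Ico l M, c i := by
    have h1 := norm_integral_le_integral_norm (μ := μ)
      (f := fun ω => ∏ i ∈ Ico l M, Z i ω)
    simp only [Real.norm_eq_abs] at h1
    refine h1.trans ?_
    have h2 : ∫ ω, |∏ i ∈ Ico l M, Z i ω| ∂μ ≤ ∫ _ω, (∏ i ∈ Ico l M, c i) ∂μ :=
      integral_mono_ae (hZprod_int (Ico l M)).abs (integrable_const _) (hZprod_ae (Ico l M))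
    simpa using h2
  -- assemble
  have T1 : |(∫ ω, ∏ i ∈ range M, Y (ns i) ω ∂μ) - ∫ ω, ∏ i ∈ range M, Z i ω ∂μ|
      ≤ (M : ℝ) * β k * ∏ i ∈ range M, c i := by
    simpa using keyA (range M)
  have TP1 : |(∫ ω, ∏ i ∈ range l, Y (ns i) ω ∂μ) - ∫ ω, ∏ i ∈ range l, Z i ω ∂μ|
      ≤ (l : ℝ) * β k * ∏ i ∈ range l, c i := by
    simpa using keyA (range l)
  have TP2 : |(∫ ω, ∏ i ∈ Ico l M, Y (ns i) ω ∂μ) - ∫ ω, ∏ i ∈ Ico l M, Z i ω ∂μ|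
      ≤ ((M - l : ℕ) : ℝ) * β k * ∏ i ∈ Ico l M, c i := by
    simpa using keyA (Ico l M)
  have T3 : |(∫ ω, ∏ i ∈ range l, Z i ω ∂μ) * (∫ ω, ∏ i ∈ Ico l M, Z i ω ∂μ)
      - (∫ ω, ∏ i ∈ range l, Y (ns i) ω ∂μ) * ∫ ω, ∏ i ∈ Ico l M, Y (ns i) ω ∂μ|
      ≤ ((l : ℝ) * β k * ∏ i ∈ range l, c i) * (∏ i ∈ Ico l M, c i)
        + (∏ i ∈ range l, c i) * (((M - l : ℕ) : ℝ) * β k * ∏ i ∈ Ico l M, c i) :=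
    abs_mul_sub_mul_le TP1 TP2 habsY habsZ
  have T2' : |(∫ ω, ∏ i ∈ range M, Z i ω ∂μ)
      - (∫ ω, ∏ i ∈ range l, Z i ω ∂μ) * ∫ ω, ∏ i ∈ Ico l M, Z i ω ∂μ|
      ≤ 4 * (∏ i ∈ range l, c i) * (∏ i ∈ Ico l M, c i) * α k := by
    rw [hQeq]; exact T2
  calc |(∫ ω, ∏ i ∈ range M, Y (ns i) ω ∂μ) -
        (∫ ω, ∏ i ∈ range l, Y (ns i) ω ∂μ) * ∫ ω, ∏ i ∈ Ico l M, Y (ns i) ω ∂μ|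
      ≤ |(∫ ω, ∏ i ∈ range M, Y (ns i) ω ∂μ) - ∫ ω, ∏ i ∈ range M, Z i ω ∂μ|
        + |(∫ ω, ∏ i ∈ range M, Z i ω ∂μ) -
            (∫ ω, ∏ i ∈ range l, Y (ns i) ω ∂μ) * ∫ ω, ∏ i ∈ Ico l M, Y (ns i) ω ∂μ| :=
        abs_sub_le _ _ _
    _ ≤ |(∫ ω, ∏ i ∈ range M, Y (ns i) ω ∂μ) - ∫ ω, ∏ i ∈ range M, Z i ω ∂μ|
        + (|(∫ ω, ∏ i ∈ range M, Z i ω ∂μ)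
            - (∫ ω, ∏ i ∈ range l, Z i ω ∂μ) * ∫ ω, ∏ i ∈ Ico l M, Z i ω ∂μ|
          + |(∫ ω, ∏ i ∈ range l, Z i ω ∂μ) * (∫ ω, ∏ i ∈ Ico l M, Z i ω ∂μ)
            - (∫ ω, ∏ i ∈ range l, Y (ns i) ω ∂μ) * ∫ ω, ∏ i ∈ Ico l M, Y (ns i) ω ∂μ|) :=
        add_le_add_right (abs_sub_le _ _ _) _
    _ ≤ ((M : ℝ) * β k * ∏ i ∈ range M, c i)
        + ((4 * (∏ i ∈ range l, c i) * (∏ i ∈ Ico l M, c i) * α k)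
          + (((l : ℝ) * β k * ∏ i ∈ range l, c i) * (∏ i ∈ Ico l M, c i)
            + (∏ i ∈ range l, c i) * (((M - l : ℕ) : ℝ) * β k * ∏ i ∈ Ico l M, c i))) :=
        add_le_add T1 (add_le_add T2' T3)
    _ = 2 * ((M : ℝ) * β k + 2 * α k) * ∏ i ∈ range M, c i := by
        rw [hsplitc, Nat.cast_sub hlM.le]
        ring
end

section
/- Let q₂,...,q_ℓ : ℕ → ℕ satisfy q_j(n+1) ≥ q_j(n) + n^γ for all n ≥ n₀ and j = 2,...,ℓ, and q_{j+1}(⌊n^{1−γ}⌋) ≥ q_j(n)·n^γ for all n ≥ n₀ and j = 1,...,ℓ−1, where γ ∈ (0,1) and q₁(n) = rn + p with integers r > 0, p ≥ 0. Then for every j = 1,...,ℓ−1 and every n ≥ n₀, q_{j+1}(n) − q_j(n) ≥ n − ⌊n^{1−γ}⌋. -/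
open Finset

lemma rpow_add_one_le {x c : ℝ} (hx : 0 ≤ x) (hc : 0 ≤ c) (hc1 : c ≤ 1) :
    (x + 1) ^ c ≤ x ^ c + 1 := by
  have h := NNReal.rpow_add_le_add_rpow x.toNNReal 1 hc hc1
  have h' := congrArg (fun t : NNReal => (t : ℝ)) (rfl : (x.toNNReal + 1 : NNReal) = _)
  have hco : ((x.toNNReal : ℝ)) = x := Real.coe_toNNReal x hx
  calc (x + 1) ^ c = (((x.toNNReal + 1 : NNReal) : ℝ)) ^ c := by
        push_cast [hco]; ring_nf
    _ = (((x.toNNReal + 1 : NNReal) ^ c : NNReal) : ℝ) := by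
        rw [← NNReal.coe_rpow]
    _ ≤ (((x.toNNReal ^ c + 1 ^ c : NNReal)) : ℝ) := by
        exact_mod_cast h
    _ = x ^ c + 1 := by
        push_cast [NNReal.coe_rpow, hco]
        simp [Real.one_rpow]

set_option maxHeartbeats 1600000 in
/-- Inequality (3.11): under conditions (2.2)-(2.4) on the functions `q j`,
for `1 ≤ j ≤ ℓ - 1` and `n ≥ n₀` one has
`q (j+1) n - q j n ≥ n - ⌊n^(1-γ)⌋`. -/
theorem gap_lower_bound
    (ℓ : ℕ) (q : ℕ → ℕ → ℕ) (γ : ℝ) (hγ0 : 0 < γ) (hγ1 : γ < 1)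
    (r p n₀ : ℕ) (hr : 0 < r) (hn₀ : 1 < n₀)
    (hq1 : ∀ n, q 1 n = r * n + p)
    (h23 : ∀ j, 2 ≤ j → j ≤ ℓ → ∀ n, n₀ ≤ n →
      (q j n : ℝ) + (n : ℝ) ^ γ ≤ q j (n + 1))
    (h24 : ∀ j, 1 ≤ j → j ≤ ℓ - 1 → ∀ n, n₀ ≤ n →
      (q j n : ℝ) * (n : ℝ) ^ γ ≤ q (j + 1) (⌊(n : ℝ) ^ (1 - γ)⌋₊))
    (j n : ℕ) (hj : 1 ≤ j) (hjℓ : j ≤ ℓ - 1) (hn : n₀ ≤ n) :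
    (n : ℝ) - ⌊(n : ℝ) ^ (1 - γ)⌋₊ ≤ (q (j + 1) n : ℝ) - q j n := by
  have hγ0' : (0:ℝ) ≤ γ := hγ0.le
  have h1γ : (0:ℝ) < 1 - γ := by linarith
  have hℓ2 : 2 ≤ ℓ := by omega
  -- growth lemma
  have grow : ∀ i, 2 ≤ i → i ≤ ℓ → ∀ a, n₀ ≤ a → ∀ b, a ≤ b →
      (q i a : ℝ) + ((b:ℝ) - a) ≤ q i b := by
    intro i h2 hiℓ a ha b hb
    induction b, hb using Nat.le_induction with
    | base => simp
    | succ b hab ih =>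
      have hb1 : (1:ℝ) ≤ (b:ℝ) := by
        have : 1 ≤ b := le_trans (le_trans hn₀.le ha) hab
        exact_mod_cast this
      have h1 : (1:ℝ) ≤ (b:ℝ) ^ γ := Real.one_le_rpow hb1 hγ0'
      have h2' := h23 i h2 hiℓ b (le_trans ha hab)
      push_cast
      linarith
  -- the point N
  obtain ⟨x, hxdef⟩ : ∃ x : ℝ, x = (n₀:ℝ) ^ (1-γ)⁻¹ := ⟨_, rfl⟩
  have hn₀1 : (1:ℝ) ≤ (n₀:ℝ) := by exact_mod_cast hn₀.le
  have hx0 : 0 ≤ x := hxdef ▸ Real.rpow_nonneg (by positivity) _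
  have hxn₀ : (n₀:ℝ) ≤ x := by
    calc (n₀:ℝ) = (n₀:ℝ) ^ (1:ℝ) := (Real.rpow_one _).symm
    _ ≤ x := hxdef ▸ Real.rpow_le_rpow_of_exponent_le hn₀1 (by
        rw [le_inv_comm₀] <;> nlinarith)
  obtain ⟨N, hNdef⟩ : ∃ N : ℕ, N = ⌈x⌉₊ := ⟨_, rfl⟩
  have hxN : x ≤ (N:ℝ) := by rw [hNdef]; exact Nat.le_ceil x
  have hNn₀ : n₀ ≤ N := by
    have : (n₀:ℝ) ≤ (N:ℝ) := le_trans hxn₀ hxN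
    exact_mod_cast this
  have hN1 : (n₀:ℝ) ≤ (N:ℝ) ^ (1-γ) := by
    have hxp : x ^ (1-γ) = (n₀:ℝ) := by
      rw [hxdef, ← Real.rpow_mul (by positivity), inv_mul_cancel₀ h1γ.ne', Real.rpow_one]
    calc (n₀:ℝ) = x ^ (1-γ) := hxp.symm
      _ ≤ (N:ℝ) ^ (1-γ) := Real.rpow_le_rpow hx0 hxN h1γ.le
  have hN2 : (N:ℝ) ^ (1-γ) < (n₀:ℝ) + 1 := by
    have hxp : x ^ (1-γ) = (n₀:ℝ) := by
      rw [hxdef, ← Real.rpow_mul (by positivity), inv_mul_cancel₀ h1γ.ne', Real.rpow_one]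
    have hNlt : (N:ℝ) < x + 1 := by rw [hNdef]; exact Nat.ceil_lt_add_one hx0
    calc (N:ℝ) ^ (1-γ) < (x + 1) ^ (1-γ) :=
          Real.rpow_lt_rpow (Nat.cast_nonneg N) hNlt h1γ
      _ ≤ x ^ (1-γ) + 1 := rpow_add_one_le hx0 h1γ.le (by linarith)
      _ = (n₀:ℝ) + 1 := by rw [hxp]
  have hMfloor : ⌊(N:ℝ) ^ (1-γ)⌋₊ = n₀ := by
    have hge : n₀ ≤ ⌊(N:ℝ) ^ (1-γ)⌋₊ := Nat.le_floor hN1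
    have hlt : ⌊(N:ℝ) ^ (1-γ)⌋₊ < n₀ + 1 := by
      rw [Nat.floor_lt (Real.rpow_nonneg (Nat.cast_nonneg N) _)]
      exact_mod_cast hN2
    omega
  have hNγ1 : (1:ℝ) ≤ (N:ℝ) ^ γ :=
    Real.one_le_rpow (le_trans hn₀1 (by exact_mod_cast hNn₀)) hγ0'
  -- claim: q i x ≥ x for n₀ ≤ x, 1 ≤ i ≤ ℓ
  have claimC : ∀ i, 1 ≤ i → i ≤ ℓ → ∀ y, n₀ ≤ y → (y:ℝ) ≤ q i y := by
    intro i hi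
    induction i, hi using Nat.le_induction with
    | base =>
      intro _ y _
      rw [hq1 y]
      have : 1 ≤ r := hr
      push_cast
      nlinarith [Nat.cast_nonneg (α := ℝ) y, Nat.cast_nonneg (α := ℝ) p,
        (by exact_mod_cast this : (1:ℝ) ≤ (r:ℝ))]
    | succ i hi ih =>
      intro hiℓ y hy
      have hi1 : i ≤ ℓ - 1 := by omega
      have h24' := h24 i hi hi1 N hNn₀
      rw [hMfloor] at h24'
      have hqiN : (N:ℝ) ≤ q i N := ih (by omega) N hNn₀
      have hqn₀ : (n₀:ℝ) ≤ q (i+1) n₀ := by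
        have h1 : (n₀:ℝ) ≤ (q i N : ℝ) * (N:ℝ) ^ γ := by
          have hNn₀' : (n₀:ℝ) ≤ (N:ℝ) := by exact_mod_cast hNn₀
          nlinarith
        linarith
      have hg := grow (i+1) (by omega) hiℓ n₀ le_rfl y hy
      linarith
  -- main proof
  obtain ⟨m, hmdef⟩ : ∃ m : ℕ, m = ⌊(n:ℝ) ^ (1-γ)⌋₊ := ⟨_, rfl⟩
  rw [← hmdef]
  have hn1 : (1:ℝ) ≤ (n:ℝ) := le_trans hn₀1 (by exact_mod_cast hn)
  have hnγ1 : (1:ℝ) ≤ (n:ℝ) ^ γ := Real.one_le_rpow hn1 hγ0'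
  have hmn : m ≤ n := by
    have h1 : ((m:ℝ)) ≤ (n:ℝ) ^ (1-γ) := by
      rw [hmdef]; exact Nat.floor_le (Real.rpow_nonneg (by positivity) _)
    have h2 : (n:ℝ) ^ (1-γ) ≤ (n:ℝ) := by
      calc (n:ℝ) ^ (1-γ) ≤ (n:ℝ) ^ (1:ℝ) :=
        Real.rpow_le_rpow_of_exponent_le hn1 (by linarith)
      _ = (n:ℝ) := Real.rpow_one _
    exact_mod_cast le_trans h1 h2
  by_cases hc : n₀ ≤ m
  · -- easy case
    have h1 := h24 j hj hjℓ n hn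
    have h2 := grow (j+1) (by omega) (by omega) m hc n hmn
    rw [← hmdef] at h1
    nlinarith [Nat.cast_nonneg (α := ℝ) (q j n)]
  · -- hard case: m < n₀
    push_neg at hc
    have hnlt : (n:ℝ) ^ (1-γ) < (n₀:ℝ) := by
      rw [hmdef] at hc
      have := Nat.floor_lt (Real.rpow_nonneg (Nat.cast_nonneg n) (1-γ)) |>.mp hc
      exact_mod_cast this
    have hnN : n < N := by
      by_contra hcon
      push_neg at hcon
      have : (N:ℝ) ^ (1-γ) ≤ (n:ℝ) ^ (1-γ) :=
        Real.rpow_le_rpow (Nat.cast_nonneg N) (by exact_mod_cast hcon) h1γ.le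
      linarith
    have hA := grow (j+1) (by omega) (by omega) n₀ le_rfl n hn
    have hB := h24 j hj hjℓ N hNn₀
    rw [hMfloor] at hB
    have hCq : (q j n : ℝ) + ((N:ℝ) - n) ≤ q j N := by
      rcases eq_or_lt_of_le hj with he | h2j
      · rw [← he, hq1, hq1]
        have hr1 : (1:ℝ) ≤ (r:ℝ) := by exact_mod_cast hr
        have hnN' : (n:ℝ) ≤ (N:ℝ) := by exact_mod_cast hnN.le
        push_cast
        have hmul : 1 * ((N:ℝ) - n) ≤ (r:ℝ) * ((N:ℝ) - n) :=
          mul_le_mul_of_nonneg_right hr1 (by linarith)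
        nlinarith [hmul]
      · exact grow j h2j (by omega) n hn N hnN.le
    have hD : (n:ℝ) ≤ q j n := claimC j hj (by omega) n hn
    have hE : (n:ℝ) ^ γ ≤ (N:ℝ) ^ γ :=
      Real.rpow_le_rpow (Nat.cast_nonneg n) (by exact_mod_cast hnN.le) hγ0'
    -- AM-GM: n - n^{1-γ} ≤ n * (n^γ - 1)
    have huv : (n:ℝ) ^ γ * (n:ℝ) ^ (1-γ) = (n:ℝ) := by
      rw [← Real.rpow_add (by linarith : (0:ℝ) < (n:ℝ))]
      norm_num
    have hG : (n:ℝ) - (n:ℝ) ^ (1-γ) ≤ (n:ℝ) * ((n:ℝ) ^ γ - 1) := by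
      nlinarith [sq_nonneg ((n:ℝ) ^ γ - 1),
        Real.rpow_nonneg (Nat.cast_nonneg n) (1-γ)]
    have hm1 : (n:ℝ) ^ (1-γ) < (m:ℝ) + 1 := by
      rw [hmdef]; exact Nat.lt_floor_add_one _
    have hNn1 : (n:ℝ) + 1 ≤ (N:ℝ) := by exact_mod_cast hnN
    have hn₀n : (n₀:ℝ) ≤ (n:ℝ) := by exact_mod_cast hn
    -- combine
    have key : (n:ℝ) * ((n:ℝ) ^ γ - 1) ≤ (q j n : ℝ) * ((N:ℝ) ^ γ - 1) :=
      mul_le_mul hD (by linarith) (by linarith) (Nat.cast_nonneg _)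
    have hstep1 : ((q j n : ℝ) + ((N:ℝ) - n)) * (N:ℝ) ^ γ ≤ q (j+1) n₀ := by
      have h := mul_le_mul_of_nonneg_right hCq
        (le_trans zero_le_one hNγ1 : (0:ℝ) ≤ (N:ℝ) ^ γ)
      linarith
    have hstep2 : (N:ℝ) - n ≤ ((N:ℝ) - n) * (N:ℝ) ^ γ := by
      nlinarith
    have hexpand : (q j n : ℝ) + (q j n : ℝ) * ((N:ℝ) ^ γ - 1) + ((N:ℝ) - n) * (N:ℝ) ^ γ
        ≤ q (j+1) n₀ := by nlinarith [hstep1]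
    linarith
end

section
/- Under the assumptions of Lemma 3.2 of the paper, the convergence (1/n)∑_{k=0}^n ∏_{j=1}^ℓ X_j(q_j(k)) → ∏_{j=1}^ℓ E X_j(0) holds almost surely, provided additionally the fourth moment bound E(∑_{k=m+1}^n R(k))⁴ ≤ C̃(n−m)² of Lemma 3.7 holds. -/
open MeasureTheory Finset

/-- Remark 3.9: under the assumptions of Lemma 3.2, together with the fourth
moment bound of Lemma 3.7 on `R(n) = ∏_j X j (q j n) - ∏_j E (X j 0)`, the
averages `(1/n) ∑_{k=0}^n ∏_j X j (q j k)` converge almost surely to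
`∏_j E (X j 0)`. -/
theorem as_sum_product_ergodic_theorem
    {Ω : Type*} {m0 : MeasurableSpace Ω} {μ : Measure Ω} [IsProbabilityMeasure μ]
    (F : WithBot ℤ → WithTop ℤ → MeasurableSpace Ω)
    (hFle : ∀ k l, F k l ≤ m0)
    (hFmono : ∀ (k k' : WithBot ℤ) (l l' : WithTop ℤ), k' ≤ k → l ≤ l' → F k l ≤ F k' l')
    (ℓ : ℕ) (hℓ : 1 ≤ ℓ)
    (X : ℕ → ℕ → Ω → ℝ) (D : ℝ)
    (hXmeas : ∀ j n, Measurable (X j n))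
    (hXb : ∀ j n ω, |X j n ω| ≤ D)
    -- stationarity of each process X j (equality of finite dimensional distributions)
    (hstat : ∀ j, 1 ≤ j → j ≤ ℓ → ∀ (s k : ℕ) (ns : Fin k → ℕ),
      μ.map (fun ω (i : Fin k) => X j (ns i + s) ω) =
        μ.map (fun ω (i : Fin k) => X j (ns i) ω))
    (κ : ℝ) (hκ : 0 < κ)
    -- exponentially fast α-mixing (2.1)
    (hα : ∀ (k n : ℕ) (A B : Set Ω), MeasurableSet[F ⊥ (k : ℤ)] A →
      MeasurableSet[F ((k + n : ℕ) : ℤ) ⊤] B →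
      |(μ (A ∩ B)).toReal - (μ A).toReal * (μ B).toReal| ≤ κ⁻¹ * Real.exp (-κ * n))
    (hβ : ∀ j, 1 ≤ j → j ≤ ℓ → ∀ (m n : ℕ),
      ∫ ω, |X j m ω - (μ[X j m| F ((m : ℤ) - (n : ℤ)) ((m : ℤ) + (n : ℤ))]) ω| ∂μ ≤
        κ⁻¹ * Real.exp (-κ * n))
    (q : ℕ → ℕ → ℕ) (γ : ℝ) (hγ0 : 0 < γ) (hγ1 : γ < 1)
    (r p n₀ : ℕ) (hr : 0 < r) (hn₀ : 1 < n₀)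
    -- condition (2.2)
    (hq1 : ∀ n, q 1 n = r * n + p)
    -- condition (2.3)
    (h23 : ∀ j, 2 ≤ j → j ≤ ℓ → ∀ n, n₀ ≤ n →
      (q j n : ℝ) + (n : ℝ) ^ γ ≤ q j (n + 1))
    -- condition (2.4)
    (h24 : ∀ j, 1 ≤ j → j ≤ ℓ - 1 → ∀ n, n₀ ≤ n →
      (q j n : ℝ) * (n : ℝ) ^ γ ≤ q (j + 1) (⌊(n : ℝ) ^ (1 - γ)⌋₊))
    (Ctil : ℝ) (hCtil : 0 < Ctil)
    -- fourth moment bound of Lemma 3.7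
    (h4 : ∀ m n : ℕ, m ≤ n →
      ∫ ω, (∑ k ∈ Ioc m n,
          ((∏ j ∈ Icc 1 ℓ, X j (q j k) ω) - ∏ j ∈ Icc 1 ℓ, ∫ ω', X j 0 ω' ∂μ)) ^ 4 ∂μ ≤
        Ctil * ((n : ℝ) - m) ^ 2) :
    ∀ᵐ ω ∂μ, Filter.Tendsto (fun n : ℕ =>
        (1 / (n : ℝ)) * ∑ k ∈ range (n + 1), ∏ j ∈ Icc 1 ℓ, X j (q j k) ω)
      Filter.atTop (nhds (∏ j ∈ Icc 1 ℓ, ∫ ω', X j 0 ω' ∂μ)) := by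
  have hΩ : Nonempty Ω := by
    by_contra h
    rw [not_nonempty_iff] at h
    have h1 := measure_univ (μ := μ)
    rw [Set.univ_eq_empty_iff.mpr h] at h1
    simp at h1
  have hD : 0 ≤ D := le_trans (abs_nonneg _) (hXb 1 0 hΩ.some)
  set c : ℝ := ∏ j ∈ Icc 1 ℓ, ∫ ω', X j 0 ω' ∂μ with hc
  set P : ℕ → Ω → ℝ := fun k ω => ∏ j ∈ Icc 1 ℓ, X j (q j k) ω with hP
  set S : ℕ → Ω → ℝ := fun n ω => ∑ k ∈ Ioc 0 n, (P k ω - c) with hS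
  have hPmeas : ∀ k, Measurable (P k) := fun k =>
    Finset.measurable_prod _ fun j _ => hXmeas j (q j k)
  have hSmeas : ∀ n, Measurable (S n) := fun n =>
    Finset.measurable_sum _ fun k _ => (hPmeas k).sub measurable_const
  have hPb : ∀ k ω, |P k ω| ≤ D ^ ℓ := by
    intro k ω
    rw [hP]; simp only
    rw [Finset.abs_prod]
    calc ∏ j ∈ Icc 1 ℓ, |X j (q j k) ω| ≤ ∏ j ∈ Icc 1 ℓ, D :=
          Finset.prod_le_prod (fun j _ => abs_nonneg _) (fun j _ => hXb _ _ _)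
      _ = D ^ ℓ := by rw [Finset.prod_const, Nat.card_Icc]; norm_num
  have hcb : |c| ≤ D ^ ℓ := by
    rw [hc, Finset.abs_prod]
    calc ∏ j ∈ Icc 1 ℓ, |∫ ω', X j 0 ω' ∂μ| ≤ ∏ j ∈ Icc 1 ℓ, D := by
          refine Finset.prod_le_prod (fun j _ => abs_nonneg _) (fun j _ => ?_)
          have := norm_integral_le_of_norm_le_const (μ := μ) (f := X j 0) (C := D)
            (ae_of_all _ fun ω => hXb j 0 ω)
          simpa using this
      _ = D ^ ℓ := by rw [Finset.prod_const, Nat.card_Icc]; norm_num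
  set B : ℝ := D ^ ℓ + D ^ ℓ with hB
  have hSb : ∀ n ω, |S n ω| ≤ n * B := by
    intro n ω
    calc |S n ω| ≤ ∑ k ∈ Ioc 0 n, |P k ω - c| := Finset.abs_sum_le_sum_abs _ _
      _ ≤ ∑ k ∈ Ioc 0 n, B := Finset.sum_le_sum fun k _ =>
          (abs_sub _ _).trans (add_le_add (hPb k ω) hcb)
      _ = n * B := by rw [Finset.sum_const, Nat.card_Ioc]; simp
  -- h n ω = (S n ω / n)^4
  set h : ℕ → Ω → ℝ := fun n ω => (S n ω / n) ^ 4 with hh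
  have hhmeas : ∀ n, Measurable (h n) := fun n =>
    ((hSmeas n).div_const _).pow_const 4
  have hhnn : ∀ n ω, 0 ≤ h n ω := fun n ω => by positivity
  have hdivb : ∀ n ω, |S n ω / (n : ℝ)| ≤ n * B := by
    intro n ω
    rcases Nat.eq_zero_or_pos n with rfl | hn
    · simp
    · calc |S n ω / (n : ℝ)| = |S n ω| / n := by rw [abs_div]; simp
        _ ≤ |S n ω| := by
            apply div_le_self (abs_nonneg _)
            exact_mod_cast hn
        _ ≤ n * B := hSb n ω
  have hhint : ∀ n, Integrable (h n) μ := by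
    intro n
    refine ⟨(hhmeas n).aestronglyMeasurable, HasFiniteIntegral.of_bounded
      (C := ((n : ℝ) * B) ^ 4) (ae_of_all _ fun ω => ?_)⟩
    rw [hh]; simp only [Real.norm_eq_abs, abs_pow]
    exact pow_le_pow_left₀ (abs_nonneg _) (hdivb n ω) 4
  have hS4int : ∀ n, Integrable (fun ω => S n ω ^ 4) μ := by
    intro n
    refine ⟨((hSmeas n).pow_const 4).aestronglyMeasurable, HasFiniteIntegral.of_bounded
      (C := ((n : ℝ) * B) ^ 4) (ae_of_all _ fun ω => ?_)⟩
    simp only [Real.norm_eq_abs, abs_pow]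
    exact pow_le_pow_left₀ (abs_nonneg _) (hSb n ω) 4
  -- integral bound
  have hintb : ∀ n, ∫ ω, h n ω ∂μ ≤ Ctil / (n : ℝ) ^ 2 := by
    intro n
    rcases Nat.eq_zero_or_pos n with rfl | hn
    · have : ∀ ω, h 0 ω = 0 := by intro ω; rw [hh, hS]; simp
      simp [this]
    have hn' : (0 : ℝ) < n := by exact_mod_cast hn
    have heq : ∫ ω, h n ω ∂μ = (∫ ω, S n ω ^ 4 ∂μ) * (((n : ℝ) ^ 4)⁻¹) := by
      rw [← integral_mul_const]
      congr 1; funext ω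
      show (S n ω / (n : ℝ)) ^ 4 = S n ω ^ 4 * ((n : ℝ) ^ 4)⁻¹
      rw [div_pow, div_eq_mul_inv]
    rw [heq]
    have h4' := h4 0 n (Nat.zero_le n)
    have h4'' : ∫ ω, S n ω ^ 4 ∂μ ≤ Ctil * (n : ℝ) ^ 2 := by
      simpa [hS, hP, hc] using h4'
    calc (∫ ω, S n ω ^ 4 ∂μ) * ((n : ℝ) ^ 4)⁻¹
        ≤ (Ctil * (n : ℝ) ^ 2) * ((n : ℝ) ^ 4)⁻¹ :=
          mul_le_mul_of_nonneg_right h4'' (by positivity)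
      _ = Ctil / (n : ℝ) ^ 2 := by field_simp
  -- summability of the bound
  have hbsum : Summable (fun n : ℕ => Ctil / (n : ℝ) ^ 2) := by
    have := (Real.summable_one_div_nat_pow (p := 2)).mpr one_lt_two
    simpa [div_eq_mul_inv] using this.mul_left Ctil
  have hbnn : ∀ n : ℕ, 0 ≤ Ctil / (n : ℝ) ^ 2 := fun n => by positivity
  -- lintegral of tsum is finite
  set g : ℕ → Ω → ENNReal := fun n ω => ENNReal.ofReal (h n ω) with hg
  have hgmeas : ∀ n, Measurable (g n) := fun n => (hhmeas n).ennreal_ofReal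
  have key : ∫⁻ ω, ∑' n, g n ω ∂μ ≠ ⊤ := by
    rw [lintegral_tsum fun n => (hgmeas n).aemeasurable]
    have h1 : ∀ n, ∫⁻ ω, g n ω ∂μ ≤ ENNReal.ofReal (Ctil / (n : ℝ) ^ 2) := by
      intro n
      rw [hg]; simp only
      rw [← ofReal_integral_eq_lintegral_ofReal (hhint n) (ae_of_all _ (hhnn n))]
      exact ENNReal.ofReal_le_ofReal (hintb n)
    refine ne_top_of_le_ne_top ?_ (ENNReal.tsum_le_tsum h1)
    rw [← ENNReal.ofReal_tsum_of_nonneg hbnn hbsum]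
    exact ENNReal.ofReal_ne_top
  have hae : ∀ᵐ ω ∂μ, (∑' n, g n ω) < ⊤ :=
    ae_lt_top (Measurable.ennreal_tsum hgmeas) key
  filter_upwards [hae] with ω hω
  -- from finiteness, h n ω → 0
  have hsum : Summable (fun n => h n ω) := by
    have := ENNReal.summable_toReal hω.ne
    refine this.congr fun n => ?_
    rw [hg]; simp only
    exact ENNReal.toReal_ofReal (hhnn n ω)
  have htend4 : Filter.Tendsto (fun n => h n ω) Filter.atTop (nhds 0) :=
    hsum.tendsto_atTop_zero
  -- deduce S n ω / n → 0
  have habs : Filter.Tendsto (fun n => |S n ω / (n : ℝ)|) Filter.atTop (nhds 0) := by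
    have hcont : ContinuousAt (fun x : ℝ => x ^ ((4 : ℝ)⁻¹)) 0 :=
      Real.continuousAt_rpow_const 0 _ (Or.inr (by norm_num))
    have := (hcont.tendsto.comp htend4)
    rw [Real.zero_rpow (by norm_num)] at this
    refine this.congr fun n => ?_
    show (h n ω) ^ ((4 : ℝ)⁻¹) = |S n ω / (n : ℝ)|
    rw [hh]; simp only
    set x := S n ω / (n : ℝ)
    have hx4 : x ^ 4 = |x| ^ 4 := by
      rw [← abs_of_nonneg (a := x ^ 4) (by positivity), abs_pow]
    rw [hx4, ← Real.rpow_natCast |x| 4, ← Real.rpow_mul (abs_nonneg x)]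
    norm_num
  have hdiv0 : Filter.Tendsto (fun n => S n ω / (n : ℝ)) Filter.atTop (nhds 0) := by
    rw [tendsto_zero_iff_abs_tendsto_zero]
    exact habs
  -- assemble
  have hP0 : Filter.Tendsto (fun n : ℕ => P 0 ω / (n : ℝ)) Filter.atTop (nhds 0) :=
    tendsto_const_div_atTop_nhds_zero_nat (P 0 ω)
  have hmain : Filter.Tendsto (fun n : ℕ => P 0 ω / (n : ℝ) + S n ω / (n : ℝ) + c)
      Filter.atTop (nhds c) := by
    have := (hP0.add hdiv0).add_const c
    simpa using this
  refine hmain.congr' ?_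
  filter_upwards [Filter.eventually_ge_atTop 1] with n hn
  have hn' : (n : ℝ) ≠ 0 := by positivity
  have hsplit : ∑ k ∈ range (n + 1), P k ω = P 0 ω + S n ω + n * c := by
    have h1 : range (n + 1) = insert 0 (Ioc 0 n) := by
      ext k
      simp only [Finset.mem_range, Finset.mem_insert, Finset.mem_Ioc]
      omega
    rw [h1, Finset.sum_insert (by simp)]
    rw [hS]; simp only
    rw [Finset.sum_sub_distrib, Finset.sum_const, Nat.card_Ioc, Nat.sub_zero]
    push_cast
    ring
  show P 0 ω / (n : ℝ) + S n ω / (n : ℝ) + c = (1 / (n : ℝ)) * ∑ k ∈ range (n + 1), P k ω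
  rw [hsplit]
  field_simp
end

section
/- Let X(0), X(1), ... be i.i.d. bounded real random variables (|X(0)| ≤ D) and q₁,...,q_ℓ strictly increasing nonnegative integer-valued functions satisfying q_{j+1}(⌊n^γ⌋) > q_j(n) for n ≥ n₀ (γ ∈ (0,1)). Set S_N = ∑_{n=0}^N ∏_{j=1}^ℓ X(q_j(n)) and M_N(t) = E e^{tS_N}. Then for every real t the limit η(t) = lim_{N→∞}(1/N) log M_N(t) exists and equals log E exp(t ∏_{j=1}^ℓ X(q_j(m))) for any m ≥ ⌊n₀^γ⌋ (this value being independent of m). -/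
open MeasureTheory ProbabilityTheory Finset

private lemma aux_int_exp {Ω : Type*} {m0 : MeasurableSpace Ω} {μ : Measure Ω}
    [IsProbabilityMeasure μ] {f : Ω → ℝ} (hf : Measurable f) {C : ℝ}
    (hC : ∀ ω, |f ω| ≤ C) (t : ℝ) :
    Integrable (fun ω => Real.exp (t * f ω)) μ := by
  refine Integrable.mono' (integrable_const (Real.exp (|t| * C)))
    ((hf.const_mul t).exp.aestronglyMeasurable) (Filter.Eventually.of_forall fun ω => ?_)
  rw [Real.norm_eq_abs, Real.abs_exp]
  refine Real.exp_le_exp.2 ?_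
  calc t * f ω ≤ |t * f ω| := le_abs_self _
    _ = |t| * |f ω| := abs_mul _ _
    _ ≤ |t| * C := by gcongr; exact hC ω

private lemma aux_map_eq_pi {Ω : Type*} {m0 : MeasurableSpace Ω} {μ : Measure Ω}
    [IsProbabilityMeasure μ]
    (X : ℕ → Ω → ℝ) (hXmeas : ∀ n, Measurable (X n))
    (hindep : iIndepFun X μ)
    (hident : ∀ n, μ.map (X n) = μ.map (X 0))
    {ι : Type*} [Fintype ι] (σ : ι → ℕ) (hσ : Function.Injective σ) :
    μ.map (fun ω i => X (σ i) ω) = Measure.pi (fun _ => μ.map (X 0)) := by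
  classical
  have hprob : IsProbabilityMeasure (μ.map (X 0)) :=
    Measure.isProbabilityMeasure_map (hXmeas 0).aemeasurable
  have hΦ : Measurable (fun ω (i : ι) => X (σ i) ω) :=
    measurable_pi_lambda _ fun i => hXmeas (σ i)
  refine (Measure.pi_eq (μ := fun _ => μ.map (X 0)) fun s hs => ?_).symm
  rw [Measure.map_apply hΦ (MeasurableSet.univ_pi hs)]
  set sets : ℕ → Set ℝ := fun k => if h : ∃ i, σ i = k then s h.choose else Set.univ with hsets
  have hsets_eq : ∀ i, sets (σ i) = s i := by
    intro i
    have h : ∃ i', σ i' = σ i := ⟨i, rfl⟩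
    simp only [hsets, dif_pos h]
    rw [hσ h.choose_spec]
  have hmeas_sets : ∀ k, MeasurableSet (sets k) := by
    intro k
    by_cases h : ∃ i, σ i = k
    · simp only [hsets, dif_pos h]; exact hs _
    · simp only [hsets, dif_neg h]; exact MeasurableSet.univ
  have hpre : (fun ω (i : ι) => X (σ i) ω) ⁻¹' (Set.univ.pi s)
      = ⋂ k ∈ Finset.image σ Finset.univ, X k ⁻¹' sets k := by
    ext ω
    simp only [Set.mem_preimage, Set.mem_pi, Set.mem_univ, forall_true_left, Set.mem_iInter,
      Finset.mem_image, Finset.mem_univ, true_and, Set.mem_preimage]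
    constructor
    · rintro h k ⟨i, rfl⟩
      rw [hsets_eq]; exact h i
    · intro h i
      have := h (σ i) ⟨i, rfl⟩
      rwa [hsets_eq] at this
  rw [hpre, hindep.measure_inter_preimage_eq_mul (Finset.image σ Finset.univ)
    (fun k _ => hmeas_sets k), Finset.prod_image (fun i _ j _ h => hσ h)]
  refine Finset.prod_congr rfl fun i _ => ?_
  rw [hsets_eq, ← Measure.map_apply (hXmeas (σ i)) (hs i), hident (σ i)]

private lemma aux_integral_eq {Ω : Type*} {m0 : MeasurableSpace Ω} {μ : Measure Ω}
    [IsProbabilityMeasure μ]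
    (X : ℕ → Ω → ℝ) (hXmeas : ∀ n, Measurable (X n))
    (hindep : iIndepFun X μ)
    (hident : ∀ n, μ.map (X n) = μ.map (X 0))
    {ι : Type*} [Fintype ι] (σ τ : ι → ℕ) (hσ : Function.Injective σ)
    (hτ : Function.Injective τ) (F : (ι → ℝ) → ℝ) (hF : Measurable F) :
    ∫ ω, F (fun i => X (σ i) ω) ∂μ = ∫ ω, F (fun i => X (τ i) ω) ∂μ := by
  have hΦσ : Measurable (fun ω (i : ι) => X (σ i) ω) :=
    measurable_pi_lambda _ fun i => hXmeas (σ i)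
  have hΦτ : Measurable (fun ω (i : ι) => X (τ i) ω) :=
    measurable_pi_lambda _ fun i => hXmeas (τ i)
  rw [← integral_map hΦσ.aemeasurable hF.aestronglyMeasurable,
    ← integral_map hΦτ.aemeasurable hF.aestronglyMeasurable,
    aux_map_eq_pi X hXmeas hindep hident σ hσ,
    aux_map_eq_pi X hXmeas hindep hident τ hτ]

private lemma aux_floor_le {γ : ℝ} (hγ0 : 0 < γ) (hγ1 : γ < 1) (n : ℕ) :
    ⌊(n : ℝ) ^ γ⌋₊ ≤ n := by
  rcases Nat.eq_zero_or_pos n with rfl | hn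
  · simp [Real.zero_rpow hγ0.ne']
  · have h1 : (1 : ℝ) ≤ (n : ℝ) := by exact_mod_cast hn
    have : (n : ℝ) ^ γ ≤ (n : ℝ) ^ (1 : ℝ) :=
      Real.rpow_le_rpow_of_exponent_le h1 hγ1.le
    rw [Real.rpow_one] at this
    have := Nat.floor_mono this
    rwa [Nat.floor_natCast] at this

private lemma aux_floor_mono {γ : ℝ} (hγ0 : 0 < γ) {n n' : ℕ} (h : n ≤ n') :
    ⌊(n : ℝ) ^ γ⌋₊ ≤ ⌊(n' : ℝ) ^ γ⌋₊ :=
  Nat.floor_mono (Real.rpow_le_rpow (Nat.cast_nonneg n) (by exact_mod_cast h) hγ0.le)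

private lemma aux_factor {Ω : Type*} {m0 : MeasurableSpace Ω} {μ : Measure Ω}
    [IsProbabilityMeasure μ]
    (X : ℕ → Ω → ℝ) (hXmeas : ∀ n, Measurable (X n))
    (hindep : iIndepFun X μ)
    (ℓ : ℕ) (q : ℕ → ℕ → ℕ) (t : ℝ) (s : Finset ℕ)
    (hdisj : ∀ n ∈ s, ∀ n' ∈ s, n ≠ n' → ∀ i ∈ Icc 1 ℓ, ∀ j ∈ Icc 1 ℓ, q i n ≠ q j n') :
    ∫ ω, Real.exp (t * ∑ n ∈ s, ∏ j ∈ Icc 1 ℓ, X (q j n) ω) ∂μ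
      = ∏ n ∈ s, ∫ ω, Real.exp (t * ∏ j ∈ Icc 1 ℓ, X (q j n) ω) ∂μ := by
  classical
  induction s using Finset.induction_on with
  | empty => simp
  | @insert a s ha ih =>
    have hdisj' : ∀ n ∈ s, ∀ n' ∈ s, n ≠ n' → ∀ i ∈ Icc 1 ℓ, ∀ j ∈ Icc 1 ℓ, q i n ≠ q j n' :=
      fun n hn n' hn' hne => hdisj n (mem_insert_of_mem hn) n' (mem_insert_of_mem hn') hne
    set S : Finset ℕ := (Icc 1 ℓ).image (fun j => q j a) with hS
    set T : Finset ℕ := s.biUnion (fun n => (Icc 1 ℓ).image (fun j => q j n)) with hT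
    have hST : Disjoint S T := by
      rw [Finset.disjoint_left]
      rintro k hkS hkT
      obtain ⟨j, hj, rfl⟩ := Finset.mem_image.1 hkS
      obtain ⟨n, hn, hk⟩ := Finset.mem_biUnion.1 hkT
      obtain ⟨i, hi, hik⟩ := Finset.mem_image.1 hk
      exact hdisj a (mem_insert_self a s) n (mem_insert_of_mem hn)
        (fun h => ha (h ▸ hn)) j hj i hi hik.symm
    have hblock := hindep.indepFun_finset S T hST hXmeas
    set F : ({k // k ∈ S} → ℝ) → ℝ := fun v =>
      Real.exp (t * ∏ j ∈ (Icc 1 ℓ).attach,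
        v ⟨q j.1 a, Finset.mem_image_of_mem _ j.2⟩) with hF
    set G : ({k // k ∈ T} → ℝ) → ℝ := fun v =>
      Real.exp (t * ∑ n ∈ s.attach, ∏ j ∈ (Icc 1 ℓ).attach,
        v ⟨q j.1 n.1, Finset.mem_biUnion.2 ⟨n.1, n.2, Finset.mem_image_of_mem _ j.2⟩⟩) with hG
    have hFmeas : Measurable F := by
      apply Measurable.exp
      apply Measurable.const_mul
      exact Finset.measurable_prod _ fun j _ => measurable_pi_apply _
    have hGmeas : Measurable G := by
      apply Measurable.exp
      apply Measurable.const_mul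
      exact Finset.measurable_sum _ fun n _ => Finset.measurable_prod _ fun j _ =>
        measurable_pi_apply _
    have hind2 := hblock.comp hFmeas hGmeas
    have hFeq : (F ∘ fun ω (k : {x // x ∈ S}) => X k.1 ω)
        = fun ω => Real.exp (t * ∏ j ∈ Icc 1 ℓ, X (q j a) ω) := by
      funext ω
      simp only [Function.comp, hF]
      rw [Finset.prod_attach (Icc 1 ℓ) (fun j => X (q j a) ω)]
    have hGeq : (G ∘ fun ω (k : {x // x ∈ T}) => X k.1 ω)
        = fun ω => Real.exp (t * ∑ n ∈ s, ∏ j ∈ Icc 1 ℓ, X (q j n) ω) := by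
      funext ω
      simp only [Function.comp, hG]
      congr 1
      congr 1
      rw [← Finset.sum_attach s (fun n => ∏ j ∈ Icc 1 ℓ, X (q j n) ω)]
      exact Finset.sum_congr rfl fun n _ => Finset.prod_attach (Icc 1 ℓ) (fun j => X (q j n) ω)
    rw [hFeq, hGeq] at hind2
    have hmeas1 : AEStronglyMeasurable (fun ω => Real.exp (t * ∏ j ∈ Icc 1 ℓ, X (q j a) ω)) μ :=
      (((Finset.measurable_prod _ fun j _ => hXmeas _).const_mul t).exp).aestronglyMeasurable
    have hmeas2 : AEStronglyMeasurable
        (fun ω => Real.exp (t * ∑ n ∈ s, ∏ j ∈ Icc 1 ℓ, X (q j n) ω)) μ :=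
      (((Finset.measurable_sum _ fun n _ => Finset.measurable_prod _ fun j _ => hXmeas _).const_mul
        t).exp).aestronglyMeasurable
    have key := IndepFun.integral_mul_eq_mul_integral hind2 hmeas1 hmeas2
    rw [Finset.prod_insert ha, ← ih hdisj']
    simp_rw [Finset.sum_insert ha]
    calc ∫ ω, Real.exp (t * (∏ j ∈ Icc 1 ℓ, X (q j a) ω
          + ∑ n ∈ s, ∏ j ∈ Icc 1 ℓ, X (q j n) ω)) ∂μ
        = ∫ ω, Real.exp (t * ∏ j ∈ Icc 1 ℓ, X (q j a) ω)
            * Real.exp (t * ∑ n ∈ s, ∏ j ∈ Icc 1 ℓ, X (q j n) ω) ∂μ := by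
          congr 1; funext ω; rw [mul_add, Real.exp_add]
      _ = (∫ ω, Real.exp (t * ∏ j ∈ Icc 1 ℓ, X (q j a) ω) ∂μ)
            * ∫ ω, Real.exp (t * ∑ n ∈ s, ∏ j ∈ Icc 1 ℓ, X (q j n) ω) ∂μ := by simpa [Pi.mul_apply] using key

/-- (5.12)-(5.14): for i.i.d. bounded `X` and strictly increasing `q j`
satisfying condition (5.6), the limit `η(t) = lim (1/N) log E e^{t S_N}` exists
for every `t`, where `S_N = ∑_{n=0}^N ∏_j X (q j n)`, and equals
`log E exp(t ∏_j X (q j m))` for every `m ≥ ⌊n₀^γ⌋`. -/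
theorem splad_limit_log_mgf
    {Ω : Type*} {m0 : MeasurableSpace Ω} {μ : Measure Ω} [IsProbabilityMeasure μ]
    (X : ℕ → Ω → ℝ) (hXmeas : ∀ n, Measurable (X n)) (D : ℝ)
    (hXb : ∀ n ω, |X n ω| ≤ D)
    (hindep : iIndepFun X μ)
    (hident : ∀ n, μ.map (X n) = μ.map (X 0))
    (ℓ : ℕ) (hℓ : 1 ≤ ℓ) (q : ℕ → ℕ → ℕ)
    (hqmono : ∀ j, 1 ≤ j → j ≤ ℓ → StrictMono (q j))
    (γ : ℝ) (hγ0 : 0 < γ) (hγ1 : γ < 1) (n₀ : ℕ)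
    -- condition (5.6)
    (h56 : ∀ j, 1 ≤ j → j ≤ ℓ - 1 → ∀ n, n₀ ≤ n →
      q j n < q (j + 1) (⌊(n : ℝ) ^ γ⌋₊)) :
    ∀ t : ℝ, ∀ m : ℕ, ⌊(n₀ : ℝ) ^ γ⌋₊ ≤ m →
      Filter.Tendsto (fun N : ℕ => (1 / (N : ℝ)) *
          Real.log (∫ ω, Real.exp (t * ∑ n ∈ range (N + 1),
            ∏ j ∈ Icc 1 ℓ, X (q j n) ω) ∂μ))
        Filter.atTop
        (nhds (Real.log (∫ ω, Real.exp (t * ∏ j ∈ Icc 1 ℓ, X (q j m) ω) ∂μ))) := by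
  intro t m hm
  classical
  -- basic monotonicity lemmas about q
  have hstep : ∀ j, 1 ≤ j → j < ℓ → ∀ n, ⌊(n₀ : ℝ) ^ γ⌋₊ ≤ n → q j n < q (j + 1) n := by
    intro j hj1 hjℓ n hn
    have hj1' : (1:ℕ) ≤ j + 1 := by omega
    have hjℓ' : j + 1 ≤ ℓ := by omega
    have hjsub : j ≤ ℓ - 1 := Nat.le_sub_one_of_lt hjℓ
    by_cases hn₀ : n₀ ≤ n
    · calc q j n < q (j + 1) (⌊(n : ℝ) ^ γ⌋₊) := h56 j hj1 hjsub n hn₀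
        _ ≤ q (j + 1) n := (hqmono (j+1) hj1' hjℓ').monotone (aux_floor_le hγ0 hγ1 n)
    · calc q j n ≤ q j n₀ := (hqmono j hj1 (le_of_lt hjℓ)).monotone (by omega)
        _ < q (j + 1) (⌊(n₀ : ℝ) ^ γ⌋₊) := h56 j hj1 hjsub n₀ le_rfl
        _ ≤ q (j + 1) n := (hqmono (j+1) hj1' hjℓ').monotone hn
  have hqlt : ∀ i j, 1 ≤ i → i < j → j ≤ ℓ → ∀ n, ⌊(n₀ : ℝ) ^ γ⌋₊ ≤ n → q i n < q j n := by
    intro i j hi1 hij hjℓ n hn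
    induction j with
    | zero => omega
    | succ j ih =>
      rcases Nat.lt_or_ge i j with h | h
      · exact lt_trans (ih (by omega) (by omega)) (hstep j (by omega) (by omega) n hn)
      · have : i = j := by omega
        subst this
        exact hstep i hi1 (by omega) n hn
  have hqle : ∀ i j, 1 ≤ i → i ≤ j → j ≤ ℓ → ∀ n, ⌊(n₀ : ℝ) ^ γ⌋₊ ≤ n → q i n ≤ q j n := by
    intro i j hi1 hij hjℓ n hn
    rcases eq_or_lt_of_le hij with rfl | h
    · exact le_rfl
    · exact (hqlt i j hi1 h hjℓ n hn).le
  have hfm : ∀ {N : ℕ}, n₀ ≤ N → ⌊(n₀ : ℝ) ^ γ⌋₊ ≤ ⌊(N : ℝ) ^ γ⌋₊ :=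
    fun {N} h => aux_floor_mono hγ0 h
  -- cross-block distinctness
  have hcross : ∀ N, n₀ ≤ N → ∀ n n', ⌊(N : ℝ) ^ γ⌋₊ ≤ n → n < n' → n' ≤ N →
      ∀ i ∈ Icc 1 ℓ, ∀ j ∈ Icc 1 ℓ, q i n ≠ q j n' := by
    intro N hN n n' hn hnn' hn'N i hi j hj
    rw [Finset.mem_Icc] at hi hj
    have hn0 : ⌊(n₀ : ℝ) ^ γ⌋₊ ≤ n := le_trans (hfm hN) hn
    have hn'0 : ⌊(n₀ : ℝ) ^ γ⌋₊ ≤ n' := le_trans hn0 hnn'.le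
    rcases Nat.lt_or_ge j i with hji | hij
    · -- q j n' < q i n
      have h1 : q j n' ≤ q j N := (hqmono j hj.1 hj.2).monotone hn'N
      have h2 : q j N < q (j+1) (⌊(N : ℝ) ^ γ⌋₊) :=
        h56 j hj.1 (Nat.le_sub_one_of_lt (lt_of_lt_of_le hji hi.2)) N hN
      have h3 : q (j+1) (⌊(N : ℝ) ^ γ⌋₊) ≤ q (j+1) n :=
        (hqmono (j+1) (by omega) (by omega)).monotone hn
      have h4 : q (j+1) n ≤ q i n := hqle (j+1) i (by omega) (by omega) hi.2 n hn0
      omega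
    · -- q i n < q j n'
      have h1 : q i n < q i n' := hqmono i hi.1 hi.2 hnn'
      have h2 : q i n' ≤ q j n' := hqle i j hi.1 hij hj.2 n' hn'0
      omega
  -- setup
  have hΩ : Nonempty Ω := by
    by_contra h
    rw [not_nonempty_iff] at h
    have : μ Set.univ = 0 := by simp [Set.univ_eq_empty_iff.2 h]
    simp [measure_univ] at this
  obtain ⟨ω₀⟩ := hΩ
  have hD0 : 0 ≤ D := le_trans (abs_nonneg _) (hXb 0 ω₀)
  set Y : ℕ → Ω → ℝ := fun n ω => ∏ j ∈ Icc 1 ℓ, X (q j n) ω with hY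
  have hYmeas : ∀ n, Measurable (Y n) := fun n => Finset.measurable_prod _ fun j _ => hXmeas _
  have hYb : ∀ n ω, |Y n ω| ≤ D ^ ℓ := by
    intro n ω
    have : |Y n ω| = ∏ j ∈ Icc 1 ℓ, |X (q j n) ω| := Finset.abs_prod _ _
    rw [this]
    calc ∏ j ∈ Icc 1 ℓ, |X (q j n) ω| ≤ ∏ j ∈ Icc 1 ℓ, D :=
          Finset.prod_le_prod (fun _ _ => abs_nonneg _) (fun j _ => hXb _ ω)
      _ = D ^ ℓ := by rw [Finset.prod_const, Nat.card_Icc]; norm_num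
  set c : ℝ := ∫ ω, Real.exp (t * Y m ω) ∂μ with hc
  have hint : ∀ n, Integrable (fun ω => Real.exp (t * Y n ω)) μ :=
    fun n => aux_int_exp (hYmeas n) (hYb n) t
  have hc_lb : Real.exp (-(|t| * D ^ ℓ)) ≤ c := by
    have hple : ∀ ω, Real.exp (-(|t| * D ^ ℓ)) ≤ Real.exp (t * Y m ω) := by
      intro ω
      refine Real.exp_le_exp.2 ?_
      have h1 : |t * Y m ω| ≤ |t| * D ^ ℓ := by
        rw [abs_mul]
        exact mul_le_mul_of_nonneg_left (hYb m ω) (abs_nonneg t)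
      calc -(|t| * D ^ ℓ) ≤ -|t * Y m ω| := neg_le_neg h1
        _ ≤ t * Y m ω := neg_abs_le _
    have := integral_mono (integrable_const _) (hint m) hple
    simpa using this
  have hc_pos : 0 < c := lt_of_lt_of_le (Real.exp_pos _) hc_lb
  -- identical distribution of the blocks
  have hinj : ∀ k, ⌊(n₀ : ℝ) ^ γ⌋₊ ≤ k →
      Function.Injective (fun j : {x // x ∈ Icc 1 ℓ} => q j.1 k) := by
    intro k hk j j' hjj
    by_contra hne
    have hj := Finset.mem_Icc.1 j.2
    have hj' := Finset.mem_Icc.1 j'.2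
    have hne' : j.1 ≠ j'.1 := fun h => hne (Subtype.ext h)
    rcases Nat.lt_or_ge j.1 j'.1 with h | h
    · exact absurd hjj (hqlt j.1 j'.1 hj.1 h hj'.2 k hk).ne
    · exact absurd hjj.symm (hqlt j'.1 j.1 hj'.1 (by omega) hj.2 k hk).ne
  have hprod_sub : ∀ k (ω : Ω),
      (∏ j : {x // x ∈ Icc 1 ℓ}, X (q j.1 k) ω) = Y k ω := by
    intro k ω
    show ∏ j : {x // x ∈ Icc 1 ℓ}, X (q j.1 k) ω = ∏ j ∈ Icc 1 ℓ, X (q j k) ω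
    exact Finset.prod_coe_sort (Icc 1 ℓ) (fun j => X (q j k) ω)
  have hc_eq : ∀ n, ⌊(n₀ : ℝ) ^ γ⌋₊ ≤ n →
      (∫ ω, Real.exp (t * Y n ω) ∂μ) = c := by
    intro n hn
    set F : ({x // x ∈ Icc 1 ℓ} → ℝ) → ℝ :=
      fun v => Real.exp (t * ∏ j, v j) with hF
    have hFmeas : Measurable F := by
      apply Measurable.exp
      apply Measurable.const_mul
      exact Finset.measurable_prod _ fun j _ => measurable_pi_apply _
    have := aux_integral_eq X hXmeas hindep hident
      (fun j : {x // x ∈ Icc 1 ℓ} => q j.1 n) (fun j => q j.1 m)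
      (hinj n hn) (hinj m hm) F hFmeas
    simp only [hF] at this
    calc (∫ ω, Real.exp (t * Y n ω) ∂μ)
        = ∫ ω, Real.exp (t * ∏ j : {x // x ∈ Icc 1 ℓ}, X (q j.1 n) ω) ∂μ := by
          simp_rw [hprod_sub]
      _ = ∫ ω, Real.exp (t * ∏ j : {x // x ∈ Icc 1 ℓ}, X (q j.1 m) ω) ∂μ := this
      _ = ∫ ω, Real.exp (t * Y m ω) ∂μ := by simp_rw [hprod_sub]
  set K : ℕ → ℕ := fun N => ⌊(N : ℝ) ^ γ⌋₊ with hKdef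
  set M : ℕ → ℝ := fun N => ∫ ω, Real.exp (t * ∑ n ∈ range (N + 1), Y n ω) ∂μ with hMdef
  set a : ℝ := |t| * D ^ ℓ with hadef
  have ha0 : 0 ≤ a := mul_nonneg (abs_nonneg t) (pow_nonneg hD0 ℓ)
  have habs : ∀ (s : Finset ℕ) (ω : Ω), |∑ n ∈ s, Y n ω| ≤ (s.card : ℝ) * D ^ ℓ := by
    intro s ω
    calc |∑ n ∈ s, Y n ω| ≤ ∑ n ∈ s, |Y n ω| := Finset.abs_sum_le_sum_abs _ _
      _ ≤ s.card • (D ^ ℓ) := Finset.sum_le_card_nsmul _ _ _ (fun n _ => hYb n ω)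
      _ = (s.card : ℝ) * D ^ ℓ := nsmul_eq_mul _ _
  have hMest : ∀ N, n₀ ≤ N → 1 ≤ N →
      |Real.log (M N) - ((N + 1 - K N : ℕ) : ℝ) * Real.log c| ≤ a * K N := by
    intro N hN0 hN1
    have hKN : K N ≤ N := aux_floor_le hγ0 hγ1 N
    have hKm : ⌊(n₀ : ℝ) ^ γ⌋₊ ≤ K N := hfm hN0
    have hSmeas : Measurable (fun ω => ∑ n ∈ range (N+1), Y n ω) :=
      Finset.measurable_sum _ fun n _ => hYmeas n
    set B : Ω → ℝ := fun ω => ∑ n ∈ Ico (K N) (N+1), Y n ω with hBdef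
    have hBmeas : Measurable B := Finset.measurable_sum _ fun n _ => hYmeas n
    have hintB : Integrable (fun ω => Real.exp (t * B ω)) μ :=
      aux_int_exp hBmeas (fun ω => habs _ ω) t
    have hintS : Integrable (fun ω => Real.exp (t * ∑ n ∈ range (N+1), Y n ω)) μ :=
      aux_int_exp hSmeas (fun ω => habs _ ω) t
    have hsplit : ∀ ω, ∑ n ∈ range (N+1), Y n ω = (∑ n ∈ range (K N), Y n ω) + B ω := by
      intro ω
      exact (Finset.sum_range_add_sum_Ico (fun n => Y n ω) (by omega : K N ≤ N+1)).symm
    have hfact : (∫ ω, Real.exp (t * B ω) ∂μ) = c ^ (N + 1 - K N) := by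
      have hdisj : ∀ n ∈ Ico (K N) (N+1), ∀ n' ∈ Ico (K N) (N+1), n ≠ n' →
          ∀ i ∈ Icc 1 ℓ, ∀ j ∈ Icc 1 ℓ, q i n ≠ q j n' := by
        intro n hn n' hn' hne i hi j hj
        rw [Finset.mem_Ico] at hn hn'
        rcases Nat.lt_or_ge n n' with h | h
        · exact hcross N hN0 n n' hn.1 h (by omega) i hi j hj
        · exact (hcross N hN0 n' n hn'.1 (by omega) (by omega) j hj i hi).symm
      have hf := aux_factor X hXmeas hindep ℓ q t (Ico (K N) (N+1)) hdisj
      calc (∫ ω, Real.exp (t * B ω) ∂μ)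
          = ∏ n ∈ Ico (K N) (N+1), ∫ ω, Real.exp (t * Y n ω) ∂μ := hf
        _ = ∏ n ∈ Ico (K N) (N+1), c :=
            Finset.prod_congr rfl fun n hn => hc_eq n (le_trans hKm (Finset.mem_Ico.1 hn).1)
        _ = c ^ (N + 1 - K N) := by rw [Finset.prod_const, Nat.card_Ico]
    have hAbound : ∀ ω, |t * ∑ n ∈ range (K N), Y n ω| ≤ a * K N := by
      intro ω
      rw [abs_mul]
      calc |t| * |∑ n ∈ range (K N), Y n ω|
          ≤ |t| * ((K N : ℝ) * D ^ ℓ) := by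
            refine mul_le_mul_of_nonneg_left ?_ (abs_nonneg t)
            simpa [Finset.card_range] using habs (range (K N)) ω
        _ = a * K N := by rw [hadef]; ring
    have hup : M N ≤ Real.exp (a * K N) * c ^ (N + 1 - K N) := by
      have hple : ∀ ω, Real.exp (t * ∑ n ∈ range (N+1), Y n ω)
          ≤ Real.exp (a * K N) * Real.exp (t * B ω) := by
        intro ω
        rw [hsplit ω, mul_add, Real.exp_add]
        refine mul_le_mul_of_nonneg_right (Real.exp_le_exp.2 ?_) (Real.exp_pos _).le
        exact le_trans (le_abs_self _) (hAbound ω)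
      calc M N ≤ ∫ ω, Real.exp (a * K N) * Real.exp (t * B ω) ∂μ :=
            integral_mono hintS (hintB.const_mul _) hple
        _ = Real.exp (a * K N) * ∫ ω, Real.exp (t * B ω) ∂μ := integral_const_mul _ _
        _ = Real.exp (a * K N) * c ^ (N + 1 - K N) := by rw [hfact]
    have hlo : Real.exp (-(a * K N)) * c ^ (N + 1 - K N) ≤ M N := by
      have hple : ∀ ω, Real.exp (-(a * K N)) * Real.exp (t * B ω)
          ≤ Real.exp (t * ∑ n ∈ range (N+1), Y n ω) := by
        intro ω
        rw [hsplit ω, mul_add, Real.exp_add]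
        refine mul_le_mul_of_nonneg_right (Real.exp_le_exp.2 ?_) (Real.exp_pos _).le
        exact le_trans (neg_le_neg (hAbound ω)) (neg_abs_le _)
      calc Real.exp (-(a * K N)) * c ^ (N + 1 - K N)
          = Real.exp (-(a * K N)) * ∫ ω, Real.exp (t * B ω) ∂μ := by rw [hfact]
        _ = ∫ ω, Real.exp (-(a * K N)) * Real.exp (t * B ω) ∂μ := (integral_const_mul _ _).symm
        _ ≤ M N := integral_mono (hintB.const_mul _) hintS hple
    have hMpos : 0 < M N := lt_of_lt_of_le (mul_pos (Real.exp_pos _) (pow_pos hc_pos _)) hlo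
    have hup' : Real.log (M N) ≤ a * K N + ((N + 1 - K N : ℕ) : ℝ) * Real.log c := by
      have h := Real.log_le_log hMpos hup
      rwa [Real.log_mul (Real.exp_ne_zero _) (pow_ne_zero _ hc_pos.ne'), Real.log_exp,
        Real.log_pow] at h
    have hlo' : -(a * K N) + ((N + 1 - K N : ℕ) : ℝ) * Real.log c ≤ Real.log (M N) := by
      have h := Real.log_le_log (mul_pos (Real.exp_pos _) (pow_pos hc_pos _)) hlo
      rwa [Real.log_mul (Real.exp_ne_zero _) (pow_ne_zero _ hc_pos.ne'), Real.log_exp,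
        Real.log_pow] at h
    rw [abs_le]
    constructor <;> [linarith; linarith]
  -- limits
  have hKtend : Filter.Tendsto (fun N : ℕ => (K N : ℝ) / N) Filter.atTop (nhds 0) := by
    have htail : Filter.Tendsto (fun N : ℕ => ((N : ℝ)) ^ (γ - 1)) Filter.atTop (nhds 0) := by
      have h1 : Filter.Tendsto (fun x : ℝ => x ^ (-(1 - γ))) Filter.atTop (nhds 0) :=
        tendsto_rpow_neg_atTop (by linarith)
      have h2 := h1.comp (tendsto_natCast_atTop_atTop (R := ℝ))
      simpa [Function.comp_def, show -(1 - γ) = γ - 1 by ring] using h2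
    refine tendsto_of_tendsto_of_tendsto_of_le_of_le' tendsto_const_nhds htail ?_ ?_
    · exact Filter.Eventually.of_forall fun N => div_nonneg (Nat.cast_nonneg _) (Nat.cast_nonneg _)
    · filter_upwards [Filter.eventually_ge_atTop 1] with N hN
      have hNpos : (0:ℝ) < N := by exact_mod_cast hN
      rw [div_le_iff₀ hNpos]
      calc (K N : ℝ) ≤ (N : ℝ) ^ γ := Nat.floor_le (Real.rpow_nonneg (Nat.cast_nonneg N) γ)
        _ = (N:ℝ) ^ (γ - 1) * N := by
            rw [← Real.rpow_add_one hNpos.ne' (γ - 1)]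
            norm_num
  have hfrac : Filter.Tendsto (fun N : ℕ => ((N + 1 - K N : ℕ) : ℝ) / N)
      Filter.atTop (nhds 1) := by
    have h1 : Filter.Tendsto (fun N : ℕ => 1 + 1 / (N:ℝ) - (K N : ℝ)/N)
        Filter.atTop (nhds 1) := by
      have h2 := (tendsto_const_nhds (x := (1:ℝ)) (f := Filter.atTop (α := ℕ))).add
        tendsto_one_div_atTop_nhds_zero_nat
      have h3 := h2.sub hKtend
      simpa using h3
    refine Filter.Tendsto.congr' ?_ h1
    filter_upwards [Filter.eventually_ge_atTop 1] with N hN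
    have hKN : K N ≤ N := aux_floor_le hγ0 hγ1 N
    have hNne : (N:ℝ) ≠ 0 := Nat.cast_ne_zero.2 (by omega)
    have hcast : ((N + 1 - K N : ℕ) : ℝ) = (N:ℝ) + 1 - (K N : ℝ) := by
      rw [Nat.cast_sub (by omega : K N ≤ N + 1)]
      push_cast
      ring
    rw [hcast]
    field_simp
  have hh : Filter.Tendsto (fun N : ℕ => ((N + 1 - K N : ℕ) : ℝ)/N * Real.log c)
      Filter.atTop (nhds (Real.log c)) := by
    simpa using hfrac.mul_const (Real.log c)
  have hdiff : Filter.Tendsto (fun N : ℕ =>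
      (1/(N:ℝ)) * Real.log (M N) - ((N + 1 - K N : ℕ) : ℝ)/N * Real.log c)
      Filter.atTop (nhds 0) := by
    have hbound2 : Filter.Tendsto (fun N : ℕ => a * ((K N : ℝ)/N)) Filter.atTop (nhds 0) := by
      simpa using hKtend.const_mul a
    refine squeeze_zero_norm' ?_ hbound2
    filter_upwards [Filter.eventually_ge_atTop (max n₀ 1)] with N hN
    have hN0 : n₀ ≤ N := le_trans (le_max_left _ _) hN
    have hN1 : 1 ≤ N := le_trans (le_max_right _ _) hN
    have hNpos : (0:ℝ) < N := by exact_mod_cast hN1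
    have hest := hMest N hN0 hN1
    have heq : (1/(N:ℝ)) * Real.log (M N) - ((N + 1 - K N : ℕ) : ℝ)/N * Real.log c
        = (1/(N:ℝ)) * (Real.log (M N) - ((N + 1 - K N : ℕ) : ℝ) * Real.log c) := by
      ring
    rw [Real.norm_eq_abs, heq, abs_mul, abs_of_pos (by positivity : (0:ℝ) < 1/(N:ℝ))]
    calc (1/(N:ℝ)) * |Real.log (M N) - ((N + 1 - K N : ℕ) : ℝ) * Real.log c|
        ≤ (1/(N:ℝ)) * (a * K N) := mul_le_mul_of_nonneg_left hest (by positivity)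
      _ = a * ((K N : ℝ)/N) := by ring
  have hgoal : Filter.Tendsto (fun N : ℕ => (1/(N:ℝ)) * Real.log (M N))
      Filter.atTop (nhds (Real.log c)) := by
    have h := hdiff.add hh
    rw [zero_add] at h
    refine h.congr fun N => ?_
    ring
  exact hgoal
end
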